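/- arXiv:1210.2319 — 5 statements merged into one kernel-verified Lean document; each statement's English description precedes it below -/
import Mathlib

section
/- Let B be a function from the set of prime numbers to [−1,1] that is μ-equidistributed with respect to the Sato–Tate measure μ, and let ε be a real-valued function on the primes with ε(p) → 0 as p → ∞. Then liminf_{x→∞} #{p ≤ x prime : B(p) > ε(p)}/π(x) ≥ 1/2. -/
open Filter Set

/-- The number of primes `p ≤ x` belonging to the set `S`. -/
noncomputable def primesCount (S : Set ℕ) (x : ℝ) : ℕ :=
  Nat.card {p : ℕ | p.Prime ∧ p ∈ S ∧ (p : ℝ) ≤ x}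

/-- The prime counting function `π(x)`. -/
noncomputable def primePi (x : ℝ) : ℕ := primesCount Set.univ x

/-- `S` has Dirichlet density `δ`. -/
def HasDirichletDensity (S : Set ℕ) (δ : ℝ) : Prop :=
  Tendsto (fun z : ℝ => (∑' p : S, ((p : ℕ) : ℝ) ^ (-z)) / Real.log (1 / (z - 1)))
    (nhdsWithin 1 (Set.Ioi 1)) (nhds δ)

/-- `S` is a regular set of primes of Dirichlet density `δ`. -/
def IsRegularPrimeSet (S : Set ℕ) (δ : ℝ) : Prop :=
  HasDirichletDensity S δ ∧
  ∃ (U : Set ℂ) (g : ℂ → ℂ), IsOpen U ∧ {z : ℂ | 1 ≤ z.re} ⊆ U ∧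
    DifferentiableOn ℂ g U ∧
    ∀ z : ℂ, 1 < z.re →
      (∑' p : S, ((p : ℕ) : ℂ) ^ (-z)) = (δ : ℂ) * Complex.log (1 / (z - 1)) + g z

/-- `S` has natural density `d` within the primes. -/
def HasNaturalPrimeDensity (S : Set ℕ) (d : ℝ) : Prop :=
  Tendsto (fun x : ℝ => (primesCount S x : ℝ) / (primePi x : ℝ)) atTop (nhds d)

/-- The Sato–Tate measure of the interval `[a,b]`. -/
noncomputable def stMeasure (a b : ℝ) : ℝ :=
  (2 / Real.pi) * ∫ t in a..b, Real.sqrt (1 - t ^ 2)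

/-- `B` is equidistributed with respect to the Sato–Tate measure on the primes. -/
def IsSatoTateEquidistributed (B : ℕ → ℝ) : Prop :=
  ∀ a b : ℝ, -1 ≤ a → a ≤ b → b ≤ 1 →
    Tendsto (fun x : ℝ => (primesCount {p | B p ∈ Set.Icc a b} x : ℝ) / (primePi x : ℝ))
      atTop (nhds (stMeasure a b))

/-- `A ⊆ ℕ` has Dedekind–Dirichlet density `δ`. -/
def HasDedekindDirichletDensity (A : Set ℕ) (δ : ℝ) : Prop :=
  Tendsto (fun z : ℝ => (z - 1) * ∑' n : A, ((n : ℕ) : ℝ) ^ (-z))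
    (nhdsWithin 1 (Set.Ioi 1)) (nhds δ)

-- auxiliary lemmas

lemma finite_primes_le (S : Set ℕ) (x : ℝ) :
    {p : ℕ | p.Prime ∧ p ∈ S ∧ (p : ℝ) ≤ x}.Finite := by
  apply (Set.finite_Iic ⌈x⌉₊).subset
  intro p hp
  have : (p : ℝ) ≤ (⌈x⌉₊ : ℝ) := hp.2.2.trans (Nat.le_ceil x)
  exact_mod_cast this

lemma primesCount_eq_ncard (S : Set ℕ) (x : ℝ) :
    primesCount S x = {p : ℕ | p.Prime ∧ p ∈ S ∧ (p : ℝ) ≤ x}.ncard :=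
  Nat.card_coe_set_eq _

lemma primesCount_le_primePi (S : Set ℕ) (x : ℝ) : primesCount S x ≤ primePi x := by
  rw [primesCount_eq_ncard, primePi, primesCount_eq_ncard]
  exact Set.ncard_le_ncard (fun p hp => ⟨hp.1, trivial, hp.2.2⟩) (finite_primes_le _ _)

lemma primePi_tendsto : Tendsto (fun x : ℝ => primePi x) atTop atTop := by
  rw [tendsto_atTop_atTop]
  intro b
  obtain ⟨t, hts, htc⟩ := Nat.infinite_setOf_prime.exists_subset_card_eq b
  refine ⟨(t.sup id : ℕ), fun x hx => ?_⟩
  have hsub : (↑t : Set ℕ) ⊆ {p : ℕ | p.Prime ∧ p ∈ (Set.univ : Set ℕ) ∧ (p : ℝ) ≤ x} := by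
    intro p hp
    refine ⟨hts hp, trivial, ?_⟩
    have h1 : p ≤ t.sup id := Finset.le_sup (f := id) hp
    have h2 : ((t.sup id : ℕ) : ℝ) ≤ x := hx
    calc (p : ℝ) ≤ ((t.sup id : ℕ) : ℝ) := by exact_mod_cast h1
      _ ≤ x := h2
  calc b = t.card := htc.symm
    _ = (↑t : Set ℕ).ncard := (Set.ncard_coe_finset t).symm
    _ ≤ _ := Set.ncard_le_ncard hsub (finite_primes_le _ _)
    _ = primePi x := (primesCount_eq_ncard _ _).symm

lemma integral01_sqrt : ∫ t in (0:ℝ)..1, Real.sqrt (1 - t ^ 2) = Real.pi / 4 := by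
  have hcont : Continuous fun t : ℝ => Real.sqrt (1 - t ^ 2) :=
    Real.continuous_sqrt.comp (by continuity)
  have hint : ∀ a b : ℝ, IntervalIntegrable (fun t => Real.sqrt (1 - t ^ 2))
      MeasureTheory.volume a b := fun a b => hcont.intervalIntegrable a b
  have hsym : ∫ t in (-1:ℝ)..0, Real.sqrt (1 - t ^ 2) = ∫ t in (0:ℝ)..1, Real.sqrt (1 - t ^ 2) := by
    rw [show (-1:ℝ) = -(1:ℝ) by ring, show (0:ℝ) = -(0:ℝ) by ring,
      ← intervalIntegral.integral_comp_neg (fun t => Real.sqrt (1 - t ^ 2))]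
    simp [neg_pow]
  have hadd := intervalIntegral.integral_add_adjacent_intervals (hint (-1) 0) (hint 0 1)
  have h := integral_sqrt_one_sub_sq
  rw [← hadd, hsym] at h
  linarith

lemma sqrt_one_sub_sq_le_one (x : ℝ) : Real.sqrt (1 - x ^ 2) ≤ 1 := by
  exact Real.sqrt_le_one.mpr (by nlinarith [sq_nonneg x])

lemma stMeasure_lower (s : ℝ) (hs0 : 0 ≤ s) (hs1 : s ≤ 1) :
    1 / 2 - (2 / Real.pi) * s ≤ stMeasure s 1 := by
  have hcont : Continuous fun t : ℝ => Real.sqrt (1 - t ^ 2) :=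
    Real.continuous_sqrt.comp (by continuity)
  have hint : ∀ a b : ℝ, IntervalIntegrable (fun t => Real.sqrt (1 - t ^ 2))
      MeasureTheory.volume a b := fun a b => hcont.intervalIntegrable a b
  have hadd := intervalIntegral.integral_add_adjacent_intervals (hint 0 s) (hint s 1)
  have hbound : ∫ t in (0:ℝ)..s, Real.sqrt (1 - t ^ 2) ≤ s := by
    have := intervalIntegral.norm_integral_le_of_norm_le_const
      (C := 1) (f := fun t : ℝ => Real.sqrt (1 - t ^ 2)) (a := 0) (b := s) ?_
    · have h2 : |s - 0| = s := by rw [sub_zero, abs_of_nonneg hs0]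
      calc ∫ t in (0:ℝ)..s, Real.sqrt (1 - t ^ 2)
          ≤ ‖∫ t in (0:ℝ)..s, Real.sqrt (1 - t ^ 2)‖ := le_abs_self _
        _ ≤ 1 * |s - 0| := this
        _ = s := by rw [one_mul, h2]
    · intro x _
      rw [Real.norm_eq_abs, abs_of_nonneg (Real.sqrt_nonneg _)]
      exact sqrt_one_sub_sq_le_one x
  have hpi : (0:ℝ) < 2 / Real.pi := by positivity
  have hval : ∫ t in s..(1:ℝ), Real.sqrt (1 - t ^ 2) ≥ Real.pi / 4 - s := by
    have := integral01_sqrt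
    linarith [hadd, hbound, this]
  have : stMeasure s 1 ≥ (2 / Real.pi) * (Real.pi / 4 - s) := by
    unfold stMeasure
    exact mul_le_mul_of_nonneg_left hval hpi.le
  have hpine : Real.pi ≠ 0 := Real.pi_ne_zero
  have : (2 / Real.pi) * (Real.pi / 4 - s) = 1 / 2 - (2 / Real.pi) * s := by
    field_simp; ring
  linarith [mul_le_mul_of_nonneg_left hval hpi.le, this]

lemma step_lemma (B ε : ℕ → ℝ) (hequi : IsSatoTateEquidistributed B)
    (hε : Tendsto ε (atTop ⊓ Filter.principal {p : ℕ | p.Prime}) (nhds 0))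
    (t : ℝ) (ht0 : 0 < t) (ht1 : t ≤ 1) :
    stMeasure t 1 ≤ Filter.liminf
      (fun x : ℝ => (primesCount {p : ℕ | p.Prime ∧ ε p < B p} x : ℝ) / (primePi x : ℝ))
      atTop := by
  have hev : ∀ᶠ p in atTop ⊓ 𝓟 {p : ℕ | p.Prime}, ε p < t := hε.eventually_lt_const ht0
  rw [eventually_inf_principal] at hev
  obtain ⟨N, hN⟩ := eventually_atTop.mp hev
  set v := fun x : ℝ => (primesCount {p : ℕ | p.Prime ∧ ε p < B p} x : ℝ) / (primePi x : ℝ)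
    with hv_def
  set u := fun x : ℝ => (primesCount {p | B p ∈ Set.Icc t 1} x : ℝ) / (primePi x : ℝ)
    - (N : ℝ) / (primePi x : ℝ) with hu_def
  have hπ : Tendsto (fun x : ℝ => ((primePi x : ℕ) : ℝ)) atTop atTop :=
    tendsto_natCast_atTop_atTop.comp primePi_tendsto
  have h2 : Tendsto (fun x : ℝ => (N : ℝ) / (primePi x : ℝ)) atTop (nhds 0) :=
    tendsto_const_nhds.div_atTop hπ
  have hu : Tendsto u atTop (nhds (stMeasure t 1)) := by
    have h1 := hequi t 1 (by linarith) ht1 le_rfl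
    simpa only [sub_zero] using h1.sub h2
  have hle : ∀ x : ℝ, u x ≤ v x := by
    intro x
    have hc : (0:ℝ) ≤ (primePi x : ℝ) := Nat.cast_nonneg _
    rcases hc.eq_or_lt with hc0 | hc0
    · simp [hu_def, hv_def, ← hc0]
    have hcount : (primesCount {p | B p ∈ Set.Icc t 1} x : ℝ)
        ≤ (primesCount {p : ℕ | p.Prime ∧ ε p < B p} x : ℝ) + N := by
      have hsub : {p : ℕ | p.Prime ∧ p ∈ {p | B p ∈ Set.Icc t 1} ∧ (p:ℝ) ≤ x}
          ⊆ {p : ℕ | p.Prime ∧ p ∈ {p : ℕ | p.Prime ∧ ε p < B p} ∧ (p:ℝ) ≤ x} ∪ Set.Iio N := by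
        intro p hp
        rcases lt_or_ge p N with h | h
        · exact Or.inr h
        · exact Or.inl ⟨hp.1, ⟨hp.1, lt_of_lt_of_le (hN p h hp.1) hp.2.1.1⟩, hp.2.2⟩
      have hnat : primesCount {p | B p ∈ Set.Icc t 1} x
          ≤ primesCount {p : ℕ | p.Prime ∧ ε p < B p} x + N := by
        rw [primesCount_eq_ncard, primesCount_eq_ncard]
        calc {p : ℕ | p.Prime ∧ p ∈ {p | B p ∈ Set.Icc t 1} ∧ (p:ℝ) ≤ x}.ncard
            ≤ ({p : ℕ | p.Prime ∧ p ∈ {p : ℕ | p.Prime ∧ ε p < B p} ∧ (p:ℝ) ≤ x}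
              ∪ Set.Iio N).ncard :=
              Set.ncard_le_ncard hsub ((finite_primes_le _ _).union (Set.finite_Iio N))
          _ ≤ {p : ℕ | p.Prime ∧ p ∈ {p : ℕ | p.Prime ∧ ε p < B p} ∧ (p:ℝ) ≤ x}.ncard
              + (Set.Iio N).ncard := Set.ncard_union_le _ _
          _ = _ + N := by rw [show (Set.Iio N).ncard = N by
              simp [Set.ncard_eq_toFinset_card']]
      exact_mod_cast hnat
    have := (div_le_div_iff_of_pos_right hc0).mpr
      (by linarith : (primesCount {p | B p ∈ Set.Icc t 1} x : ℝ) - N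
        ≤ (primesCount {p : ℕ | p.Prime ∧ ε p < B p} x : ℝ))
    simpa [hu_def, hv_def, sub_div] using this
  have hv1 : ∀ x : ℝ, v x ≤ 1 := by
    intro x
    have hc : (0:ℝ) ≤ (primePi x : ℝ) := Nat.cast_nonneg _
    rcases hc.eq_or_lt with hc0 | hc0
    · simp [hv_def, ← hc0]
    exact div_le_one_of_le₀ (by exact_mod_cast primesCount_le_primePi _ x) hc
  have hcobdd : IsCoboundedUnder (· ≥ ·) atTop v :=
    (isBoundedUnder_of ⟨1, fun x => hv1 x⟩).isCoboundedUnder_ge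
  calc stMeasure t 1 = liminf u atTop := hu.liminf_eq.symm
    _ ≤ liminf v atTop := liminf_le_liminf (Eventually.of_forall hle)
        hu.isBoundedUnder_ge hcobdd


/-- Key step in the proof of Theorem 4.1: if `B` is Sato–Tate equidistributed on the
primes and `ε(p) → 0` as `p → ∞` along the primes, then
`liminf_{x → ∞} #{p ≤ x prime : B(p) > ε(p)} / π(x) ≥ 1/2`. -/
theorem liminf_count_gt_ge_half (B ε : ℕ → ℝ)
    (hB : ∀ p : ℕ, p.Prime → B p ∈ Set.Icc (-1 : ℝ) 1)
    (hequi : IsSatoTateEquidistributed B)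
    (hε : Tendsto ε (atTop ⊓ Filter.principal {p : ℕ | p.Prime}) (nhds 0)) :
    (1 / 2 : ℝ) ≤ Filter.liminf
      (fun x : ℝ => (primesCount {p : ℕ | p.Prime ∧ ε p < B p} x : ℝ) / (primePi x : ℝ))
      atTop := by
  set L := Filter.liminf
      (fun x : ℝ => (primesCount {p : ℕ | p.Prime ∧ ε p < B p} x : ℝ) / (primePi x : ℝ))
      atTop with hL
  have key : ∀ n : ℕ, 1 / 2 - (2 / Real.pi) * (1 / (n + 2 : ℝ)) ≤ L := by
    intro n
    have ht0 : (0:ℝ) < 1 / (n + 2 : ℝ) := by positivity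
    have ht1 : (1 : ℝ) / (n + 2 : ℝ) ≤ 1 := by
      rw [div_le_one (by positivity)]
      have : (0:ℝ) ≤ (n:ℝ) := Nat.cast_nonneg n
      linarith
    calc 1 / 2 - (2 / Real.pi) * (1 / (n + 2 : ℝ))
        ≤ stMeasure (1 / (n + 2 : ℝ)) 1 := stMeasure_lower _ ht0.le ht1
      _ ≤ L := step_lemma B ε hequi hε _ ht0 ht1
  have hlim : Tendsto (fun n : ℕ => 1 / 2 - (2 / Real.pi) * (1 / (n + 2 : ℝ)))
      atTop (nhds (1 / 2)) := by
    have h1 : Tendsto (fun n : ℕ => ((n : ℝ) + 2)) atTop atTop :=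
      tendsto_atTop_add_const_right _ 2 tendsto_natCast_atTop_atTop
    have h2 : Tendsto (fun n : ℕ => 1 / ((n:ℝ) + 2)) atTop (nhds 0) :=
      tendsto_const_nhds.div_atTop h1
    have := (tendsto_const_nhds (x := (1/2 : ℝ)) (f := atTop)).sub
      ((tendsto_const_nhds (x := (2/Real.pi : ℝ)) (f := atTop)).mul h2)
    simpa using this
  exact le_of_tendsto hlim (Eventually.of_forall key)
end

section
/- Let B be a function from the set of prime numbers to [−1,1] and suppose there exist C > 0 and α > 0 such that for all subintervals [a,b] ⊆ [−1,1] and all x ≥ 2 one has |#{p ≤ x prime : B(p) ∈ [a,b]}/π(x) − μ([a,b])| ≤ C·x^{−α}, where μ is the Sato–Tate measure. Let ε be a real-valued function on the primes with |ε(p)| ≤ 1/(2√p) for all primes p. Then there exist C₁ > 0, β > 0 and x₀ > 0 such that for all x > x₀, |#{p ≤ x prime : B(p) > ε(p)}/π(x) − 1/2| ≤ C₁·x^{−β}. -/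
open Filter Set

section Aux

open intervalIntegral Finset

lemma primesCount_eq_card (S : Set ℕ) [DecidablePred (· ∈ S)] (x : ℝ) (hx : 0 ≤ x) :
    primesCount S x
      = ((Finset.range (⌊x⌋₊ + 1)).filter (fun p => p.Prime ∧ p ∈ S)).card := by
  have hset : {p : ℕ | p.Prime ∧ p ∈ S ∧ (p : ℝ) ≤ x}
      = ↑((Finset.range (⌊x⌋₊ + 1)).filter (fun p => p.Prime ∧ p ∈ S)) := by
    ext p
    simp only [Finset.coe_filter, Finset.mem_range, Set.mem_setOf_eq, Nat.lt_succ_iff,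
      Nat.le_floor_iff hx]
    tauto
  rw [primesCount, hset, Nat.card_coe_set_eq, Set.ncard_coe_finset]

lemma primesCount_le_add {S T U : Set ℕ} [DecidablePred (· ∈ S)] [DecidablePred (· ∈ T)]
    [DecidablePred (· ∈ U)] {x : ℝ} (hx : 0 ≤ x)
    (h : ∀ p : ℕ, p.Prime → (p : ℝ) ≤ x → p ∈ S → p ∈ T ∨ p ∈ U) :
    primesCount S x ≤ primesCount T x + primesCount U x := by
  rw [primesCount_eq_card S x hx, primesCount_eq_card T x hx, primesCount_eq_card U x hx]
  refine le_trans (Finset.card_le_card ?_) (Finset.card_union_le _ _)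
  intro p hp
  simp only [Finset.mem_filter, Finset.mem_range, Nat.lt_succ_iff, Finset.mem_union] at hp ⊢
  obtain ⟨hpr, hprime, hpS⟩ := hp
  have hpx : (p : ℝ) ≤ x := (Nat.le_floor_iff hx).1 hpr
  rcases h p hprime hpx hpS with h' | h'
  · exact Or.inl ⟨hpr, hprime, h'⟩
  · exact Or.inr ⟨hpr, hprime, h'⟩

lemma primesCount_small {x y : ℝ} (hx : 0 ≤ x) (hy : 0 ≤ y) :
    (primesCount {p : ℕ | (p : ℝ) ≤ y} x : ℝ) ≤ y + 1 := by
  classical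
  rw [primesCount_eq_card _ x hx]
  have hsub : ((Finset.range (⌊x⌋₊ + 1)).filter (fun p => p.Prime ∧ p ∈ {p : ℕ | (p : ℝ) ≤ y}))
      ⊆ Finset.range (⌊y⌋₊ + 1) := by
    intro p hp
    simp only [Finset.mem_filter, Set.mem_setOf_eq, Finset.mem_range, Nat.lt_succ_iff] at hp ⊢
    exact Nat.le_floor hp.2.2
  have := Finset.card_le_card hsub
  rw [Finset.card_range] at this
  calc ((Finset.filter _ _).card : ℝ) ≤ (⌊y⌋₊ + 1 : ℕ) := by exact_mod_cast this
    _ ≤ y + 1 := by push_cast; linarith [Nat.floor_le hy]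

lemma centralBinom_le_pow (n : ℕ) (hn : 1 ≤ n) :
    Nat.centralBinom n ≤ (2 * n) ^ ((Finset.range (2 * n + 1)).filter Nat.Prime).card := by
  have h2n : 0 < 2 * n := by omega
  have hne : Nat.centralBinom n ≠ 0 := (Nat.centralBinom_pos n).ne'
  conv_lhs => rw [← Nat.factorization_prod_pow_eq_self hne]
  rw [Nat.prod_factorization_eq_prod_primeFactors]
  have hsub : (Nat.centralBinom n).primeFactors ⊆ (Finset.range (2 * n + 1)).filter Nat.Prime := by
    intro p hp
    have hpp : p.Prime := Nat.prime_of_mem_primeFactors hp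
    have h1 : 1 ≤ (Nat.centralBinom n).factorization p := by
      have := Nat.Prime.factorization_pos_of_dvd hpp hne (Nat.dvd_of_mem_primeFactors hp)
      omega
    have hle : p ^ (Nat.centralBinom n).factorization p ≤ 2 * n := by
      rw [Nat.centralBinom]
      exact Nat.pow_factorization_choose_le h2n
    have : p ≤ 2 * n := le_trans (Nat.le_self_pow (by omega) p) hle
    simp only [Finset.mem_filter, Finset.mem_range]
    exact ⟨by omega, hpp⟩
  calc ∏ p ∈ (Nat.centralBinom n).primeFactors, p ^ (Nat.centralBinom n).factorization p
      ≤ ∏ _p ∈ (Nat.centralBinom n).primeFactors, 2 * n := by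
        refine Finset.prod_le_prod (fun _ _ => Nat.zero_le _) (fun p hp => ?_)
        rw [Nat.centralBinom]; exact Nat.pow_factorization_choose_le h2n
    _ = (2 * n) ^ (Nat.centralBinom n).primeFactors.card := by
        rw [Finset.prod_const]
    _ ≤ (2 * n) ^ ((Finset.range (2 * n + 1)).filter Nat.Prime).card :=
        Nat.pow_le_pow_right h2n (Finset.card_le_card hsub)

lemma cheb_aux (n : ℕ) (hn : 200000 ≤ n)
    (hk : Nat.centralBinom n ≤ (2 * n) ^ ((Finset.range (2 * n + 1)).filter Nat.Prime).card) :
    2 * Real.sqrt n ≤ (((Finset.range (2 * n + 1)).filter Nat.Prime).card : ℝ) := by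
  set k : ℕ := ((Finset.range (2 * n + 1)).filter Nat.Prime).card with hkdef
  by_contra hcon
  push_neg at hcon
  have hn0 : (0:ℝ) < n := by positivity
  have hn1 : (1:ℝ) ≤ n := by exact_mod_cast Nat.one_le_iff_ne_zero.2 (by omega)
  have h2n1 : (1:ℝ) ≤ 2 * n := by linarith
  have hsq1 : (1:ℝ) ≤ Real.sqrt n := by
    rw [show (1:ℝ) = Real.sqrt 1 by simp]; exact Real.sqrt_le_sqrt hn1
  have h1 : (4:ℝ) ^ n ≤ (2 * (n:ℝ)) ^ (k + 1) := by
    have hb : 4 ^ n < n * Nat.centralBinom n := Nat.four_pow_lt_mul_centralBinom n (by omega)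
    have : (4:ℕ) ^ n ≤ (2 * n) * (2 * n) ^ k := by
      calc (4:ℕ) ^ n ≤ n * Nat.centralBinom n := hb.le
        _ ≤ (2 * n) * (2 * n) ^ k := Nat.mul_le_mul (by omega) hk
    calc (4:ℝ) ^ n ≤ (2 * n) * (2 * n) ^ k := by exact_mod_cast this
      _ = (2 * (n:ℝ)) ^ (k + 1) := by ring
  have h2 : (2 * (n:ℝ)) ^ (k + 1) ≤ (2 * (n:ℝ)) ^ (3 * Real.sqrt n : ℝ) := by
    rw [← Real.rpow_natCast (2 * (n:ℝ)) (k + 1)]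
    apply Real.rpow_le_rpow_of_exponent_le h2n1
    push_cast
    nlinarith [hcon, hsq1]
  have h3 : (n:ℝ) * Real.log 4 ≤ 3 * Real.sqrt n * Real.log (2 * n) := by
    have := Real.log_le_log (by positivity) (h1.trans h2)
    rwa [Real.log_pow, Real.log_rpow (by linarith)] at this
  have h4 : Real.log (2 * (n:ℝ)) ≤ 4 * (2 * (n:ℝ)) ^ ((1:ℝ)/4) := by
    have := Real.log_le_rpow_div (by positivity : (0:ℝ) ≤ 2 * n) (by norm_num : (0:ℝ) < 1/4)
    calc Real.log (2 * (n:ℝ)) ≤ (2 * (n:ℝ)) ^ ((1:ℝ)/4) / (1/4) := this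
      _ = 4 * (2 * (n:ℝ)) ^ ((1:ℝ)/4) := by ring
  have h5 : (2 * (n:ℝ)) ^ ((1:ℝ)/4) ≤ 2 * (n:ℝ) ^ ((1:ℝ)/4) := by
    rw [Real.mul_rpow (by norm_num) hn0.le]
    have : (2:ℝ) ^ ((1:ℝ)/4) ≤ 2 := by
      calc (2:ℝ) ^ ((1:ℝ)/4) ≤ 2 ^ (1:ℝ) :=
            Real.rpow_le_rpow_of_exponent_le (by norm_num) (by norm_num)
        _ = 2 := Real.rpow_one 2
    have hpos : (0:ℝ) ≤ (n:ℝ) ^ ((1:ℝ)/4) := Real.rpow_nonneg hn0.le _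
    nlinarith
  have hsqr : Real.sqrt (n:ℝ) = (n:ℝ) ^ ((1:ℝ)/2) := by
    rw [Real.sqrt_eq_rpow]
  have h34 : (n:ℝ) ^ ((1:ℝ)/2) * (n:ℝ) ^ ((1:ℝ)/4) = (n:ℝ) ^ ((3:ℝ)/4) := by
    rw [← Real.rpow_add hn0]; norm_num
  have h6 : (n:ℝ) * Real.log 4 ≤ 24 * (n:ℝ) ^ ((3:ℝ)/4) := by
    have hs : 0 ≤ Real.sqrt (n:ℝ) := Real.sqrt_nonneg _
    calc (n:ℝ) * Real.log 4 ≤ 3 * Real.sqrt n * Real.log (2 * n) := h3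
      _ ≤ 3 * Real.sqrt n * (4 * (2 * (n:ℝ)) ^ ((1:ℝ)/4)) := by
          apply mul_le_mul_of_nonneg_left h4 (by positivity)
      _ ≤ 3 * Real.sqrt n * (4 * (2 * (n:ℝ) ^ ((1:ℝ)/4))) := by
          have : (0:ℝ) ≤ 3 * Real.sqrt n := by positivity
          nlinarith [h5]
      _ = 24 * ((n:ℝ) ^ ((1:ℝ)/2) * (n:ℝ) ^ ((1:ℝ)/4)) := by rw [hsqr]; ring
      _ = 24 * (n:ℝ) ^ ((3:ℝ)/4) := by rw [h34]
  have hlog4 : (1.38:ℝ) ≤ Real.log 4 := by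
    have h2' : Real.log 4 = 2 * Real.log 2 := by
      rw [show (4:ℝ) = 2 ^ (2:ℕ) by norm_num, Real.log_pow]; push_cast; ring
    have := Real.log_two_gt_d9
    linarith
  have hq : (n:ℝ) = (n:ℝ) ^ ((3:ℝ)/4) * (n:ℝ) ^ ((1:ℝ)/4) := by
    rw [← Real.rpow_add hn0]; norm_num
  have h34pos : (0:ℝ) < (n:ℝ) ^ ((3:ℝ)/4) := Real.rpow_pos_of_pos hn0 _
  have h7 : (n:ℝ) ^ ((1:ℝ)/4) ≤ 18 := by
    by_contra hq18
    push_neg at hq18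
    have : (n:ℝ) * 1.38 ≤ 24 * (n:ℝ) ^ ((3:ℝ)/4) := by
      nlinarith [Real.log_nonneg (by norm_num : (1:ℝ) ≤ 4)]
    rw [hq] at this
    nlinarith
  have h8 : (n:ℝ) ≤ 18 ^ (4:ℕ) := by
    calc (n:ℝ) = ((n:ℝ) ^ ((1:ℝ)/4)) ^ (4:ℕ) := by
          rw [← Real.rpow_natCast ((n:ℝ) ^ ((1:ℝ)/4)) 4, ← Real.rpow_mul hn0.le]; norm_num
      _ ≤ 18 ^ (4:ℕ) := by
          have := Real.rpow_nonneg hn0.le ((1:ℝ)/4)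
          exact pow_le_pow_left₀ this h7 4
  norm_num at h8
  have : (n:ℝ) ≥ 200000 := by exact_mod_cast hn
  linarith

lemma primePi_lower {x : ℝ} (hx : 400002 ≤ x) : Real.sqrt x ≤ (primePi x : ℝ) := by
  classical
  have hx0 : (0:ℝ) ≤ x := by linarith
  set m : ℕ := ⌊x / 2⌋₊ with hm
  have hm2 : (200000 : ℕ) ≤ m := Nat.le_floor (by push_cast; linarith)
  have hmx : (2 * m : ℝ) ≤ x := by
    have := Nat.floor_le (by linarith : (0:ℝ) ≤ x / 2)
    push_cast
    linarith
  have hcard : (((Finset.range (2 * m + 1)).filter Nat.Prime).card : ℝ) ≤ (primePi x : ℝ) := by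
    rw [primePi, primesCount_eq_card _ x hx0]
    have hsub : (Finset.range (2 * m + 1)).filter Nat.Prime
        ⊆ (Finset.range (⌊x⌋₊ + 1)).filter (fun p => p.Prime ∧ p ∈ (Set.univ : Set ℕ)) := by
      intro p hp
      simp only [Finset.mem_filter, Finset.mem_range, Nat.lt_succ_iff, Set.mem_univ,
        and_true] at hp ⊢
      refine ⟨Nat.le_floor ?_, hp.2⟩
      have : (p : ℝ) ≤ 2 * m := by exact_mod_cast hp.1
      linarith
    exact_mod_cast Finset.card_le_card hsub
  have hcheb := cheb_aux m hm2 (centralBinom_le_pow m (by omega))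
  have hsq : Real.sqrt x ≤ 2 * Real.sqrt m := by
    have h4m : x ≤ 4 * m := by
      have hxm : x < 2 * m + 2 := by
        have := Nat.lt_floor_add_one (x / 2)
        push_cast
        linarith
      have : (2:ℝ) ≤ 2 * m := by
        have : (200000:ℝ) ≤ m := by exact_mod_cast hm2
        linarith
      linarith
    calc Real.sqrt x ≤ Real.sqrt (4 * m) := Real.sqrt_le_sqrt h4m
      _ = 2 * Real.sqrt m := by
          rw [show (4 * (m:ℝ)) = 2 ^ 2 * m by ring, Real.sqrt_mul (by positivity),
            Real.sqrt_sq (by norm_num)]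
  linarith

lemma stCont : Continuous fun t : ℝ => Real.sqrt (1 - t ^ 2) := by
  fun_prop

lemma stInt (a b : ℝ) : IntervalIntegrable (fun t : ℝ => Real.sqrt (1 - t ^ 2))
    MeasureTheory.volume a b := stCont.intervalIntegrable a b

lemma stIntegral_nonneg {a b : ℝ} (hab : a ≤ b) :
    0 ≤ ∫ t in a..b, Real.sqrt (1 - t ^ 2) :=
  intervalIntegral.integral_nonneg hab (fun t _ => Real.sqrt_nonneg _)

lemma stIntegral_le {a b : ℝ} (hab : a ≤ b) :
    (∫ t in a..b, Real.sqrt (1 - t ^ 2)) ≤ b - a := by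
  have h : (∫ t in a..b, Real.sqrt (1 - t ^ 2)) ≤ ∫ _t in a..b, (1:ℝ) := by
    apply intervalIntegral.integral_mono_on hab (stInt a b) intervalIntegrable_const
    intro t _
    exact Real.sqrt_le_one.2 (by nlinarith [sq_nonneg t])
  simpa using h

lemma stIntegral_half : (∫ t in (0:ℝ)..1, Real.sqrt (1 - t ^ 2)) = Real.pi / 4 := by
  have hsym : (∫ t in (-1:ℝ)..0, Real.sqrt (1 - t ^ 2))
      = ∫ t in (0:ℝ)..1, Real.sqrt (1 - t ^ 2) := by
    have := intervalIntegral.integral_comp_neg (a := (0:ℝ)) (b := 1)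
      (fun t : ℝ => Real.sqrt (1 - t ^ 2))
    simp only [neg_sq, neg_zero, neg_one_mul] at this
    rw [← this]
  have hadd : (∫ t in (-1:ℝ)..0, Real.sqrt (1 - t ^ 2))
        + (∫ t in (0:ℝ)..1, Real.sqrt (1 - t ^ 2))
      = ∫ t in (-1:ℝ)..1, Real.sqrt (1 - t ^ 2) :=
    intervalIntegral.integral_add_adjacent_intervals (stInt _ _) (stInt _ _)
  have hval : (∫ t in (-1:ℝ)..1, Real.sqrt (1 - t ^ 2)) = Real.pi / 2 :=
    integral_sqrt_one_sub_sq
  rw [hsym, hval] at hadd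
  linarith

lemma stMeasure_zero_one : stMeasure 0 1 = 1 / 2 := by
  rw [stMeasure, stIntegral_half]
  field_simp
  ring

lemma stMeasure_split (a : ℝ) :
    stMeasure a 1 = (2 / Real.pi) * (∫ t in a..(0:ℝ), Real.sqrt (1 - t ^ 2)) + 1 / 2 := by
  rw [← stMeasure_zero_one, stMeasure, stMeasure,
    ← intervalIntegral.integral_add_adjacent_intervals (stInt a 0) (stInt 0 1)]
  ring

lemma two_div_pi_mem : 0 ≤ 2 / Real.pi ∧ 2 / Real.pi ≤ 1 := by
  constructor
  · positivity
  · rw [div_le_one Real.pi_pos]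
    linarith [Real.pi_gt_three]

lemma stMeasure_neg_le {d : ℝ} (hd : 0 ≤ d) : stMeasure (-d) 1 ≤ 1 / 2 + d := by
  rw [stMeasure_split]
  have h1 := stIntegral_le (show -d ≤ 0 by linarith)
  have h0 := stIntegral_nonneg (show -d ≤ 0 by linarith)
  obtain ⟨hp0, hp1⟩ := two_div_pi_mem
  nlinarith

lemma stMeasure_pos_ge {d : ℝ} (hd : 0 ≤ d) : 1 / 2 - d ≤ stMeasure d 1 := by
  rw [stMeasure_split]
  have h1 : (∫ t in (0:ℝ)..d, Real.sqrt (1 - t ^ 2)) ≤ d := by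
    have := stIntegral_le (show (0:ℝ) ≤ d by linarith)
    linarith
  have h0 := stIntegral_nonneg (show (0:ℝ) ≤ d by linarith)
  have hrev : (∫ t in d..(0:ℝ), Real.sqrt (1 - t ^ 2))
      = -(∫ t in (0:ℝ)..d, Real.sqrt (1 - t ^ 2)) := intervalIntegral.integral_symm 0 d
  obtain ⟨hp0, hp1⟩ := two_div_pi_mem
  rw [hrev]
  nlinarith

end Aux

set_option maxHeartbeats 1000000 in
/-- Quantitative estimate from the proof of Theorem 4.2: if the Sato–Tate
equidistribution of `B` holds with an error term `C x^{-α}` uniformly over subintervals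
`[a,b] ⊆ [-1,1]`, and `|ε(p)| ≤ 1/(2√p)` for all primes `p`, then the counting function
of `{p : B(p) > ε(p)}` converges to `1/2` with a power-saving error term. -/
theorem quantitative_sign_equidistribution (B ε : ℕ → ℝ)
    (hB : ∀ p : ℕ, p.Prime → B p ∈ Set.Icc (-1 : ℝ) 1)
    (C α : ℝ) (hC : 0 < C) (hα : 0 < α)
    (herr : ∀ a b : ℝ, -1 ≤ a → a ≤ b → b ≤ 1 → ∀ x : ℝ, 2 ≤ x →
      |(primesCount {p : ℕ | B p ∈ Set.Icc a b} x : ℝ) / (primePi x : ℝ) - stMeasure a b|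
        ≤ C * x ^ (-α))
    (hε : ∀ p : ℕ, p.Prime → |ε p| ≤ 1 / (2 * Real.sqrt p)) :
    ∃ C₁ > (0 : ℝ), ∃ β > (0 : ℝ), ∃ x₀ > (0 : ℝ), ∀ x : ℝ, x₀ < x →
      |(primesCount {p : ℕ | p.Prime ∧ ε p < B p} x : ℝ) / (primePi x : ℝ) - 1 / 2|
        ≤ C₁ * x ^ (-β) := by
  classical
  refine ⟨C + 4, by linarith, min α (1/8), lt_min hα (by norm_num), 400002, by norm_num, ?_⟩
  intro x hx
  have hx400 : (400002:ℝ) ≤ x := hx.le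
  have hx0 : (0:ℝ) < x := by linarith
  have hx1 : (1:ℝ) ≤ x := by linarith
  have hx2 : (2:ℝ) ≤ x := by linarith
  set δ : ℝ := x ^ (-(1/8) : ℝ) with hδdef
  have hδpos : 0 < δ := Real.rpow_pos_of_pos hx0 _
  have h18 : (2:ℝ) ≤ x ^ ((1/8):ℝ) := by
    have h256 : (256:ℝ) ≤ x := by linarith
    calc (2:ℝ) = (256:ℝ) ^ ((1/8):ℝ) := by
          rw [show (256:ℝ) = 2 ^ (8:ℕ) by norm_num, ← Real.rpow_natCast 2 8,
            ← Real.rpow_mul (by norm_num)]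
          norm_num
      _ ≤ x ^ ((1/8):ℝ) := Real.rpow_le_rpow (by norm_num) h256 (by norm_num)
  have hmul : δ * x ^ ((1/8):ℝ) = 1 := by
    rw [hδdef, ← Real.rpow_add hx0]; norm_num
  have hδhalf : δ ≤ 1/2 := by
    have h8pos : 0 < x ^ ((1/8):ℝ) := Real.rpow_pos_of_pos hx0 _
    nlinarith
  set y : ℝ := x ^ ((1/4):ℝ) with hydef
  have hy0 : 0 < y := Real.rpow_pos_of_pos hx0 _
  have hy1 : (1:ℝ) ≤ y := Real.one_le_rpow hx1 (by norm_num)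
  have hsmall : ∀ p : ℕ, p.Prime → y < (p:ℝ) → |ε p| < δ := by
    intro p hp hyp
    have hppos : 0 < (p:ℝ) := lt_trans hy0 hyp
    have hys : Real.sqrt y = x ^ ((1/8):ℝ) := by
      rw [hydef, Real.sqrt_eq_rpow, ← Real.rpow_mul hx0.le]; norm_num
    have hsp : x ^ ((1/8):ℝ) < Real.sqrt p := by
      have := Real.sqrt_lt_sqrt hy0.le hyp
      linarith [hys ▸ this]
    have hsp0 : 0 < Real.sqrt (p:ℝ) := Real.sqrt_pos.2 hppos
    have hlt : 1 / (2 * Real.sqrt p) < δ := by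
      rw [div_lt_iff₀ (by positivity)]
      have h' : δ * x ^ ((1/8):ℝ) < δ * Real.sqrt p := mul_lt_mul_of_pos_left hsp hδpos
      nlinarith
    exact lt_of_le_of_lt (hε p hp) hlt
  have hups : ∀ p : ℕ, p.Prime → (p:ℝ) ≤ x → p ∈ {q : ℕ | q.Prime ∧ ε q < B q} →
      p ∈ {q : ℕ | B q ∈ Set.Icc (-δ) 1} ∨ p ∈ {q : ℕ | (q:ℝ) ≤ y} := by
    intro p hp _ hmem
    by_cases hpy : (p:ℝ) ≤ y
    · exact Or.inr hpy
    · left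
      push_neg at hpy
      have h1 := (abs_lt.1 (hsmall p hp hpy)).1
      simp only [Set.mem_setOf_eq] at hmem ⊢
      exact ⟨by linarith [hmem.2], (hB p hp).2⟩
  have hdowns : ∀ p : ℕ, p.Prime → (p:ℝ) ≤ x → p ∈ {q : ℕ | B q ∈ Set.Icc (2*δ) 1} →
      p ∈ {q : ℕ | q.Prime ∧ ε q < B q} ∨ p ∈ {q : ℕ | (q:ℝ) ≤ y} := by
    intro p hp _ hmem
    by_cases hpy : (p:ℝ) ≤ y
    · exact Or.inr hpy
    · left
      push_neg at hpy
      have h1 := (abs_lt.1 (hsmall p hp hpy)).2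
      simp only [Set.mem_setOf_eq, Set.mem_Icc] at hmem ⊢
      exact ⟨hp, by linarith [hmem.1]⟩
  have hN := primesCount_le_add hx0.le hups
  have hN' := primesCount_le_add hx0.le hdowns
  have hE : (primesCount {p : ℕ | (p:ℝ) ≤ y} x : ℝ) ≤ y + 1 :=
    primesCount_small hx0.le hy0.le
  have hP : Real.sqrt x ≤ (primePi x : ℝ) := primePi_lower hx400
  have hsx : (0:ℝ) < Real.sqrt x := Real.sqrt_pos.2 hx0
  have hPpos : (0:ℝ) < (primePi x : ℝ) := lt_of_lt_of_le hsx hP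
  set P : ℝ := (primePi x : ℝ) with hPdef
  have hEP : (primesCount {p : ℕ | (p:ℝ) ≤ y} x : ℝ) / P ≤ 2 * δ := by
    have hstep1 : (primesCount {p : ℕ | (p:ℝ) ≤ y} x : ℝ) / P ≤ (2*y) / Real.sqrt x :=
      div_le_div₀ (by positivity) (by linarith) hsx hP
    have hid : (2*y) / Real.sqrt x = 2 * x ^ (-(1/4):ℝ) := by
      rw [Real.sqrt_eq_rpow x, hydef, mul_div_assoc, ← Real.rpow_sub hx0]
      norm_num
    have hle : x ^ (-(1/4):ℝ) ≤ x ^ (-(1/8):ℝ) :=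
      Real.rpow_le_rpow_of_exponent_le hx1 (by norm_num)
    calc (primesCount {p : ℕ | (p:ℝ) ≤ y} x : ℝ) / P ≤ (2*y) / Real.sqrt x := hstep1
      _ = 2 * x ^ (-(1/4):ℝ) := hid
      _ ≤ 2 * δ := by rw [hδdef]; linarith
  have hA := herr (-δ) 1 (by linarith) (by linarith) le_rfl x hx2
  have hA' := herr (2*δ) 1 (by linarith) (by linarith) le_rfl x hx2
  have hAu : (primesCount {p : ℕ | B p ∈ Set.Icc (-δ) 1} x : ℝ) / P
      ≤ 1/2 + δ + C * x ^ (-α) := by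
    have h := (abs_le.1 hA).2
    have hstm := stMeasure_neg_le hδpos.le
    rw [hPdef]
    linarith
  have hAl : 1/2 - 2*δ - C * x ^ (-α)
      ≤ (primesCount {p : ℕ | B p ∈ Set.Icc (2*δ) 1} x : ℝ) / P := by
    have h := (abs_le.1 hA').1
    have hstm := stMeasure_pos_ge (by linarith : (0:ℝ) ≤ 2*δ)
    rw [hPdef]
    linarith
  have hNcast : (primesCount {p : ℕ | p.Prime ∧ ε p < B p} x : ℝ)
      ≤ (primesCount {p : ℕ | B p ∈ Set.Icc (-δ) 1} x : ℝ)
        + (primesCount {p : ℕ | (p:ℝ) ≤ y} x : ℝ) := by exact_mod_cast hN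
  have hN'cast : (primesCount {p : ℕ | B p ∈ Set.Icc (2*δ) 1} x : ℝ)
      ≤ (primesCount {p : ℕ | p.Prime ∧ ε p < B p} x : ℝ)
        + (primesCount {p : ℕ | (p:ℝ) ≤ y} x : ℝ) := by exact_mod_cast hN'
  have hdiv1 : (primesCount {p : ℕ | p.Prime ∧ ε p < B p} x : ℝ) / P
      ≤ (primesCount {p : ℕ | B p ∈ Set.Icc (-δ) 1} x : ℝ) / P
        + (primesCount {p : ℕ | (p:ℝ) ≤ y} x : ℝ) / P := by
    rw [← add_div]
    gcongr
  have hdiv2 : (primesCount {p : ℕ | B p ∈ Set.Icc (2*δ) 1} x : ℝ) / P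
      ≤ (primesCount {p : ℕ | p.Prime ∧ ε p < B p} x : ℝ) / P
        + (primesCount {p : ℕ | (p:ℝ) ≤ y} x : ℝ) / P := by
    rw [← add_div]
    gcongr
  have hxa : C * x ^ (-α) ≤ C * x ^ (-(min α (1/8))) := by
    have := Real.rpow_le_rpow_of_exponent_le hx1
      (neg_le_neg (min_le_left α (1/8)))
    nlinarith
  have hxd : δ ≤ x ^ (-(min α (1/8))) := by
    rw [hδdef]
    exact Real.rpow_le_rpow_of_exponent_le hx1 (neg_le_neg (min_le_right α (1/8)))
  have hrnn : (0:ℝ) ≤ x ^ (-(min α (1/8))) := Real.rpow_nonneg hx0.le _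
  rw [abs_le]
  constructor
  · linarith only [hdiv2, hAl, hEP, hxa, hxd, hrnn]
  · linarith only [hdiv1, hAu, hEP, hxa, hxd, hrnn]
end

section
/- Let s : ℕ → ℝ be a multiplicative arithmetic function taking values in {−1, 0, 1}. Suppose that {p prime : s(p) = 1} and {p prime : s(p) = −1} are regular sets of primes, each of Dirichlet density 1/2, and that {p prime : s(p) = 0} is a regular set of primes of Dirichlet density 0. Then the sets {n ∈ ℕ : s(n) = 1} and {n ∈ ℕ : s(n) = −1} have equal positive Dedekind–Dirichlet densities; more precisely, each has Dedekind–Dirichlet density equal to half of the Dedekind–Dirichlet density of the set {n ∈ ℕ : s(n) ≠ 0}, which exists and is positive. -/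
open Filter Set

namespace BKaux

lemma log_one_add_le {x : ℝ} (hx : -1 < x) : Real.log (1 + x) ≤ x := by
  have := Real.log_le_sub_one_of_pos (x := 1 + x) (by linarith)
  linarith

lemma le_log_one_add {x : ℝ} (hx : 0 ≤ x) : x - x ^ 2 ≤ Real.log (1 + x) := by
  have h1 : (0:ℝ) < 1 + x := by linarith
  have h2 : Real.log (1 + x)⁻¹ ≤ (1 + x)⁻¹ - 1 := Real.log_le_sub_one_of_pos (by positivity)
  rw [Real.log_inv] at h2
  have h3 : x / (1 + x) ≤ Real.log (1 + x) := by
    have h5 : (1:ℝ) - (1 + x)⁻¹ = x / (1+x) := by field_simp; ring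
    linarith
  have h4 : x - x ^ 2 ≤ x / (1 + x) := by
    rw [div_eq_mul_inv, ← sub_nonneg]
    have : x * (1+x)⁻¹ - (x - x^2) = x^3 * (1+x)⁻¹ := by field_simp; ring
    rw [this]; positivity
  linarith


lemma cast_pow_rpow (p m : ℕ) (z : ℝ) : ((p ^ m : ℕ) : ℝ) ^ (-z) = ((p:ℝ) ^ (-z)) ^ m := by
  push_cast
  rw [← Real.rpow_natCast ((p:ℝ) ^ (-z)) m, ← Real.rpow_mul (Nat.cast_nonneg p),
    ← Real.rpow_natCast (p:ℝ) m, ← Real.rpow_mul (Nat.cast_nonneg p), mul_comm]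

/-- The tail of the local Euler factor. -/
noncomputable def Yf (u : ℕ → ℝ) (z : ℝ) (p : ℕ) : ℝ :=
  ∑' e : ℕ, u (p ^ (e+1)) * ((p ^ (e+1) : ℕ) : ℝ) ^ (-z)

section

variable {u : ℕ → ℝ} {z : ℝ} {p : ℕ}

lemma q_pos (hp : 0 < p) : 0 < (p:ℝ) ^ (-z) :=
  Real.rpow_pos_of_pos (by exact_mod_cast hp) _

lemma q_lt_half (hp : 2 ≤ p) (hz : 1 < z) : (p:ℝ) ^ (-z) < 1/2 := by
  have h2 : (2:ℝ) < (p:ℝ) ^ z := by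
    calc (2:ℝ) = 2 ^ (1:ℝ) := by rw [Real.rpow_one]
    _ < 2 ^ z := Real.rpow_lt_rpow_of_exponent_lt (by norm_num) hz
    _ ≤ (p:ℝ) ^ z := Real.rpow_le_rpow (by norm_num) (by exact_mod_cast hp) (by linarith)
  rw [Real.rpow_neg (Nat.cast_nonneg p), show (1:ℝ)/2 = 2⁻¹ by norm_num]
  gcongr

lemma term_abs_le (hu : ∀ n, |u n| ≤ 1) (e : ℕ) :
    |u (p ^ (e+1)) * ((p ^ (e+1) : ℕ) : ℝ) ^ (-z)| ≤ ((p:ℝ) ^ (-z)) ^ (e+1) := by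
  have h0 : (0:ℝ) ≤ ((p:ℝ) ^ (-z)) ^ (e+1) :=
    pow_nonneg (Real.rpow_nonneg (Nat.cast_nonneg p) _) _
  rw [abs_mul, cast_pow_rpow, abs_of_nonneg h0]
  exact mul_le_of_le_one_left h0 (hu _)

lemma summable_tail (hp : 0 < p) (hq : (p:ℝ) ^ (-z) < 1) (hu : ∀ n, |u n| ≤ 1) :
    Summable (fun e : ℕ => u (p ^ (e+1)) * ((p ^ (e+1) : ℕ) : ℝ) ^ (-z)) := by
  apply Summable.of_norm_bounded (g := fun e => ((p:ℝ) ^ (-z)) ^ (e+1))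
  · exact ((summable_geometric_of_lt_one (le_of_lt (q_pos hp)) hq).mul_left _).congr
      (fun e => by rw [← pow_succ'])
  · exact term_abs_le hu

lemma tsum_geom_succ (hp : 0 < p) (hq : (p:ℝ) ^ (-z) < 1) :
    ∑' e : ℕ, ((p:ℝ) ^ (-z)) ^ (e+1) = (p:ℝ) ^ (-z) * (1 - (p:ℝ) ^ (-z))⁻¹ := by
  calc ∑' e : ℕ, ((p:ℝ) ^ (-z)) ^ (e+1) = ∑' e : ℕ, (p:ℝ) ^ (-z) * ((p:ℝ) ^ (-z)) ^ e := by
        congr 1; funext e; rw [← pow_succ']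
  _ = (p:ℝ) ^ (-z) * (1 - (p:ℝ) ^ (-z))⁻¹ := by
        rw [tsum_mul_left, tsum_geometric_of_lt_one (le_of_lt (q_pos hp)) hq]

lemma abs_Yf_le (hp : 2 ≤ p) (hz : 1 < z) (hu : ∀ n, |u n| ≤ 1) :
    |Yf u z p| ≤ 2 * (p:ℝ) ^ (-z) := by
  have hq : (p:ℝ) ^ (-z) < 1/2 := q_lt_half hp hz
  have hq1 : (p:ℝ) ^ (-z) < 1 := by linarith
  have h0 := q_pos (p := p) (z := z) (by omega)
  have hs : Summable (fun e : ℕ => ((p:ℝ) ^ (-z)) ^ (e+1)) :=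
    ((summable_geometric_of_lt_one (le_of_lt h0) hq1).mul_left _).congr
      (fun e => by rw [← pow_succ'])
  have := tsum_of_norm_bounded (f := fun e : ℕ => u (p ^ (e+1)) * ((p ^ (e+1) : ℕ) : ℝ) ^ (-z))
    hs.hasSum (fun e => by rw [Real.norm_eq_abs]; exact term_abs_le hu e)
  rw [Real.norm_eq_abs] at this
  rw [tsum_geom_succ (by omega) hq1] at this
  refine this.trans ?_
  have hinv : (1 - (p:ℝ) ^ (-z))⁻¹ ≤ 2 := by
    rw [inv_le_comm₀ (by linarith) (by norm_num)]
    linarith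
  calc (p:ℝ) ^ (-z) * (1 - (p:ℝ) ^ (-z))⁻¹ ≤ (p:ℝ) ^ (-z) * 2 := by
        exact mul_le_mul_of_nonneg_left hinv (le_of_lt h0)
  _ = 2 * (p:ℝ) ^ (-z) := by ring

end
end BKaux

namespace BKaux
section
variable {u : ℕ → ℝ} {z : ℝ} {p : ℕ}

lemma Yf_sub_first (hp : 2 ≤ p) (hz : 1 < z) (hu : ∀ n, |u n| ≤ 1) :
    |Yf u z p - u p * (p:ℝ) ^ (-z)| ≤ 2 * ((p:ℝ) ^ (-z)) ^ 2 := by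
  set q := (p:ℝ) ^ (-z) with hqdef
  have hq : q < 1/2 := q_lt_half hp hz
  have hq1 : q < 1 := by linarith
  have h0 : 0 < q := q_pos (by omega)
  have hsum := summable_tail (u := u) (z := z) (p := p) (by omega) hq1 hu
  have hsplit := Summable.tsum_eq_zero_add hsum
  have hfirst : u (p ^ (0+1)) * ((p ^ (0+1) : ℕ) : ℝ) ^ (-z) = u p * q := by
    norm_num
    exact Or.inl rfl
  rw [show Yf u z p = _ from hsplit, hfirst, add_sub_cancel_left]
  have hs2 : Summable (fun e : ℕ => q ^ (e+2)) :=
    ((summable_geometric_of_lt_one (le_of_lt h0) hq1).mul_left (q^2)).congr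
      (fun e => by rw [← pow_add]; ring_nf)
  have hb := tsum_of_norm_bounded
    (f := fun e : ℕ => u (p ^ (e+1+1)) * ((p ^ (e+1+1) : ℕ) : ℝ) ^ (-z)) hs2.hasSum
    (fun e => by rw [Real.norm_eq_abs]; exact term_abs_le hu (e+1))
  rw [Real.norm_eq_abs] at hb
  refine hb.trans ?_
  have : ∑' e : ℕ, q ^ (e+2) = q^2 * (1-q)⁻¹ := by
    calc ∑' e : ℕ, q ^ (e+2) = ∑' e : ℕ, q^2 * q ^ e := by
          congr 1; funext e; rw [← pow_add]; ring_nf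
    _ = q^2 * (1-q)⁻¹ := by rw [tsum_mul_left, tsum_geometric_of_lt_one (le_of_lt h0) hq1]
  rw [this]
  have hinv : (1 - q)⁻¹ ≤ 2 := by
    rw [inv_le_comm₀ (by linarith) (by norm_num)]; linarith
  calc q^2 * (1-q)⁻¹ ≤ q^2 * 2 := mul_le_mul_of_nonneg_left hinv (by positivity)
  _ = 2 * q^2 := by ring

lemma Yf_nonneg (hp : 0 < p) (hq1 : (p:ℝ) ^ (-z) < 1) (hu : ∀ n, |u n| ≤ 1)
    (hpos : ∀ n, 0 ≤ u n) : 0 ≤ Yf u z p :=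
  tsum_nonneg fun e => mul_nonneg (hpos _) (Real.rpow_nonneg (Nat.cast_nonneg _) _)

lemma summable_local (hp : 0 < p) (hq1 : (p:ℝ) ^ (-z) < 1) (hu : ∀ n, |u n| ≤ 1) :
    Summable (fun e : ℕ => u (p ^ e) * ((p ^ e : ℕ) : ℝ) ^ (-z)) := by
  apply Summable.of_norm_bounded (g := fun e => ((p:ℝ) ^ (-z)) ^ e)
  · exact summable_geometric_of_lt_one (le_of_lt (q_pos hp)) hq1
  · intro e
    have h0 : (0:ℝ) ≤ ((p:ℝ) ^ (-z)) ^ e :=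
      pow_nonneg (Real.rpow_nonneg (Nat.cast_nonneg p) _) _
    rw [Real.norm_eq_abs, abs_mul, cast_pow_rpow, abs_of_nonneg h0]
    exact mul_le_of_le_one_left h0 (hu _)

lemma local_eq (hp : 0 < p) (hq1 : (p:ℝ) ^ (-z) < 1) (hu : ∀ n, |u n| ≤ 1) (hu1 : u 1 = 1) :
    (∑' e : ℕ, u (p ^ e) * ((p ^ e : ℕ) : ℝ) ^ (-z)) = 1 + Yf u z p := by
  rw [Summable.tsum_eq_zero_add (summable_local hp hq1 hu)]
  congr 1
  simp [hu1]

end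
end BKaux

namespace BKaux

lemma abs_log_one_add_le {y : ℝ} (hy : |y| < 1) : |Real.log (1+y)| ≤ |y| / (1 - |y|) := by
  have h1 : -|y| ≤ y := neg_abs_le y
  have h2 : y ≤ |y| := le_abs_self y
  have hpos : (0:ℝ) < 1 + y := by linarith [abs_nonneg y]
  have hpos2 : (0:ℝ) < 1 - |y| := by linarith
  have key : (1 - |y|)⁻¹ - 1 = |y| / (1 - |y|) := by field_simp; ring
  rw [abs_le]
  constructor
  · have hmono : Real.log (1 - |y|) ≤ Real.log (1 + y) :=
      Real.log_le_log hpos2 (by linarith)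
    have : Real.log (1 - |y|)⁻¹ ≤ (1 - |y|)⁻¹ - 1 := Real.log_le_sub_one_of_pos (by positivity)
    rw [Real.log_inv] at this
    linarith
  · have := Real.log_le_sub_one_of_pos hpos
    have h3 : |y| ≤ |y| / (1 - |y|) := by
      rw [le_div_iff₀ hpos2]
      nlinarith [abs_nonneg y]
    linarith

section
variable {u : ℕ → ℝ} {z : ℝ}

lemma summable_global (hz : 1 < z) (hu : ∀ n, |u n| ≤ 1) :
    Summable (fun n : ℕ => ‖u n * ((n:ℕ):ℝ) ^ (-z)‖) := by
  refine Summable.of_nonneg_of_le (fun n => norm_nonneg _) (fun n => ?_)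
    (Real.summable_nat_rpow.mpr (by linarith : -z < -1))
  have h0 : (0:ℝ) ≤ (n:ℝ) ^ (-z) := Real.rpow_nonneg (Nat.cast_nonneg n) _
  rw [Real.norm_eq_abs, abs_mul, abs_of_nonneg h0]
  exact mul_le_of_le_one_left h0 (hu _)

lemma summable_primes_rpow (hz : 1 < z) :
    Summable (fun p : Nat.Primes => ((p:ℕ):ℝ) ^ (-z)) :=
  (Real.summable_nat_rpow.mpr (by linarith : -z < -1)).comp_injective Nat.Primes.coe_nat_injective

lemma summable_primes_rpow_two :
    Summable (fun p : Nat.Primes => ((p:ℕ):ℝ) ^ (-(2:ℝ))) :=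
  (Real.summable_nat_rpow.mpr (by norm_num : -(2:ℝ) < -1)).comp_injective
    Nat.Primes.coe_nat_injective

lemma summable_log_local (hz : 1 < z) (hu : ∀ n, |u n| ≤ 1) :
    Summable (fun p : Nat.Primes => Real.log (1 + Yf u z (p:ℕ))) := by
  set ε := 1 - 2 * (2:ℝ) ^ (-z) with hε
  have h2z : (2:ℝ) ^ (-z) < 1/2 := q_lt_half le_rfl hz
  have hεpos : 0 < ε := by rw [hε]; linarith
  apply Summable.of_norm_bounded (g := fun p : Nat.Primes => (2/ε) * ((p:ℕ):ℝ) ^ (-z))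
    ((summable_primes_rpow hz).mul_left _)
  intro p
  have hp2 : 2 ≤ (p:ℕ) := p.2.two_le
  have hq : ((p:ℕ):ℝ) ^ (-z) < 1/2 := q_lt_half hp2 hz
  have hq0 : 0 < ((p:ℕ):ℝ) ^ (-z) := q_pos (by omega)
  have hq2 : ((p:ℕ):ℝ) ^ (-z) ≤ (2:ℝ) ^ (-z) := by
    have hle : (2:ℝ) ^ z ≤ ((p:ℕ):ℝ) ^ z :=
      Real.rpow_le_rpow (by norm_num) (by exact_mod_cast hp2) (by linarith)
    rw [Real.rpow_neg (Nat.cast_nonneg _), Real.rpow_neg (by norm_num)]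
    gcongr
  have hY := abs_Yf_le hp2 hz hu
  have hY1 : |Yf u z (p:ℕ)| < 1 := by
    calc |Yf u z (p:ℕ)| ≤ 2 * ((p:ℕ):ℝ) ^ (-z) := hY
    _ < 2 * (1/2) := by linarith
    _ = 1 := by norm_num
  rw [Real.norm_eq_abs]
  calc |Real.log (1 + Yf u z (p:ℕ))| ≤ |Yf u z (p:ℕ)| / (1 - |Yf u z (p:ℕ)|) :=
        abs_log_one_add_le hY1
  _ ≤ (2 * ((p:ℕ):ℝ) ^ (-z)) / ε := by
      apply div_le_div₀ (by positivity) hY hεpos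
      rw [hε]
      have : 2 * ((p:ℕ):ℝ) ^ (-z) ≤ 2 * (2:ℝ) ^ (-z) := by linarith
      linarith [hY.trans this]
  _ = (2/ε) * ((p:ℕ):ℝ) ^ (-z) := by ring

end
end BKaux

namespace BKaux
section
variable {u : ℕ → ℝ} {z : ℝ} {p : ℕ}

lemma one_add_Yf_pos (hp2 : 2 ≤ p) (hz : 1 < z) (hu : ∀ n, |u n| ≤ 1) :
    0 < 1 + Yf u z p := by
  have hY := abs_Yf_le hp2 hz hu
  have hq : (p:ℝ) ^ (-z) < 1/2 := q_lt_half hp2 hz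
  have := neg_abs_le (Yf u z p)
  nlinarith

lemma log_local_le (hp2 : 2 ≤ p) (hz : 1 < z) (hu : ∀ n, |u n| ≤ 1) :
    Real.log (1 + Yf u z p) ≤ u p * (p:ℝ) ^ (-z) + 2 * ((p:ℝ) ^ (-z)) ^ 2 := by
  have h1 : Real.log (1 + Yf u z p) ≤ Yf u z p :=
    log_one_add_le (by linarith [one_add_Yf_pos hp2 hz hu])
  have h2 := Yf_sub_first hp2 hz hu
  have := le_abs_self (Yf u z p - u p * (p:ℝ) ^ (-z))
  linarith

lemma log_local_sub_bound (hp2 : 2 ≤ p) (hz : 1 < z) (hu : ∀ n, |u n| ≤ 1)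
    (hpos : ∀ n, 0 ≤ u n) :
    |Real.log (1 + Yf u z p) - u p * (p:ℝ) ^ (-z)| ≤ 6 * ((p:ℝ) ^ (-z)) ^ 2 := by
  set q := (p:ℝ) ^ (-z) with hqdef
  have hq : q < 1/2 := q_lt_half hp2 hz
  have hq0 : 0 < q := q_pos (by omega)
  have hYnn : 0 ≤ Yf u z p := Yf_nonneg (by omega) (by linarith) hu hpos
  have hY := abs_Yf_le hp2 hz hu
  rw [abs_of_nonneg hYnn] at hY
  have h1 : Real.log (1 + Yf u z p) ≤ Yf u z p := log_one_add_le (by linarith)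
  have h2 : Yf u z p - (Yf u z p) ^ 2 ≤ Real.log (1 + Yf u z p) := le_log_one_add hYnn
  have h3 := Yf_sub_first hp2 hz hu
  have h4 : (Yf u z p) ^ 2 ≤ 4 * q ^ 2 := by nlinarith
  rw [abs_le] at h3 ⊢
  constructor <;> nlinarith [h3.1, h3.2]

lemma euler_exp (hz : 1 < z) (hu1 : u 1 = 1)
    (humul : ∀ m n : ℕ, Nat.Coprime m n → u (m * n) = u m * u n)
    (hu : ∀ n, |u n| ≤ 1) :
    ∑' n : ℕ, u n * ((n:ℕ):ℝ) ^ (-z)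
      = Real.exp (∑' p : Nat.Primes, Real.log (1 + Yf u z (p:ℕ))) := by
  have hf1 : u 1 * ((1:ℕ):ℝ) ^ (-z) = 1 := by
    rw [hu1]; norm_num
  have hf0 : u 0 * ((0:ℕ):ℝ) ^ (-z) = 0 := by
    rw [Nat.cast_zero, Real.zero_rpow (by intro h; simp at h; linarith), mul_zero]
  have hmul : ∀ {m n : ℕ}, Nat.Coprime m n →
      u (m * n) * ((m * n : ℕ):ℝ) ^ (-z)
        = (u m * ((m:ℕ):ℝ) ^ (-z)) * (u n * ((n:ℕ):ℝ) ^ (-z)) := by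
    intro m n hco
    rw [humul m n hco]
    push_cast
    rw [Real.mul_rpow (Nat.cast_nonneg m) (Nat.cast_nonneg n)]
    ring
  have hE := EulerProduct.eulerProduct_hasProd hf1 hmul (summable_global hz hu) hf0
  have hloc : (fun p : Nat.Primes => ∑' e : ℕ, u ((p:ℕ) ^ e) * (((p:ℕ) ^ e : ℕ):ℝ) ^ (-z))
      = fun p : Nat.Primes => 1 + Yf u z (p:ℕ) := by
    funext p
    exact local_eq p.2.pos (by linarith [q_lt_half (p := (p:ℕ)) p.2.two_le hz]) hu hu1
  rw [hloc] at hE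
  have hP2 := (summable_log_local hz hu).hasSum.rexp
  have hexp : (Real.exp ∘ fun p : Nat.Primes => Real.log (1 + Yf u z (p:ℕ)))
      = fun p : Nat.Primes => 1 + Yf u z (p:ℕ) := by
    funext p
    exact Real.exp_log (one_add_Yf_pos p.2.two_le hz hu)
  rw [hexp] at hP2
  exact hE.unique hP2

end
end BKaux

namespace BKaux
section
variable {s : ℕ → ℝ} {z : ℝ}

lemma hsb (hz : 1 < z) : Summable (fun n : ℕ => ((n:ℕ):ℝ) ^ (-z)) :=
  Real.summable_nat_rpow.mpr (by linarith)

lemma split_abs_nat (hval : ∀ n : ℕ, s n = -1 ∨ s n = 0 ∨ s n = 1) (hz : 1 < z) :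
    ∑' n : ℕ, |s n| * ((n:ℕ):ℝ) ^ (-z)
      = (∑' n : {n : ℕ | s n = 1}, ((n:ℕ):ℝ) ^ (-z))
        + ∑' n : {n : ℕ | s n = -1}, ((n:ℕ):ℝ) ^ (-z) := by
  rw [tsum_subtype {n : ℕ | s n = 1} (fun n : ℕ => ((n:ℕ):ℝ) ^ (-z)), tsum_subtype {n : ℕ | s n = -1} (fun n : ℕ => ((n:ℕ):ℝ) ^ (-z)),
    ← Summable.tsum_add ((hsb hz).indicator _) ((hsb hz).indicator _)]
  congr 1; funext n
  rcases hval n with h | h | h <;>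
    simp only [Set.indicator_apply, Set.mem_setOf_eq, h] <;> norm_num

lemma split_signed_nat (hval : ∀ n : ℕ, s n = -1 ∨ s n = 0 ∨ s n = 1) (hz : 1 < z) :
    ∑' n : ℕ, s n * ((n:ℕ):ℝ) ^ (-z)
      = (∑' n : {n : ℕ | s n = 1}, ((n:ℕ):ℝ) ^ (-z))
        - ∑' n : {n : ℕ | s n = -1}, ((n:ℕ):ℝ) ^ (-z) := by
  rw [tsum_subtype {n : ℕ | s n = 1} (fun n : ℕ => ((n:ℕ):ℝ) ^ (-z)), tsum_subtype {n : ℕ | s n = -1} (fun n : ℕ => ((n:ℕ):ℝ) ^ (-z)),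
    ← Summable.tsum_sub ((hsb hz).indicator _) ((hsb hz).indicator _)]
  congr 1; funext n
  rcases hval n with h | h | h <;>
    simp only [Set.indicator_apply, Set.mem_setOf_eq, h] <;> norm_num

lemma abs_eq_ne_nat (hval : ∀ n : ℕ, s n = -1 ∨ s n = 0 ∨ s n = 1) :
    ∑' n : ℕ, |s n| * ((n:ℕ):ℝ) ^ (-z)
      = ∑' n : {n : ℕ | s n ≠ 0}, ((n:ℕ):ℝ) ^ (-z) := by
  rw [tsum_subtype {n : ℕ | s n ≠ 0} (fun n : ℕ => ((n:ℕ):ℝ) ^ (-z))]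
  congr 1; funext n
  rcases hval n with h | h | h <;>
    simp only [Set.indicator_apply, Set.mem_setOf_eq, h] <;> norm_num

lemma split_abs_primes (hval : ∀ n : ℕ, s n = -1 ∨ s n = 0 ∨ s n = 1) (hz : 1 < z) :
    ∑' p : Nat.Primes, |s (p:ℕ)| * (((p:ℕ):ℕ):ℝ) ^ (-z)
      = (∑' p : {p : ℕ | p.Prime ∧ s p = 1}, ((p:ℕ):ℝ) ^ (-z))
        + ∑' p : {p : ℕ | p.Prime ∧ s p = -1}, ((p:ℕ):ℝ) ^ (-z) := by
  have : ∑' p : Nat.Primes, |s (p:ℕ)| * (((p:ℕ):ℕ):ℝ) ^ (-z)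
      = ∑' p : {p : ℕ | p.Prime}, |s (p:ℕ)| * (((p:ℕ):ℕ):ℝ) ^ (-z) := rfl
  rw [this, tsum_subtype {p : ℕ | p.Prime} (fun n : ℕ => |s n| * ((n:ℕ):ℝ) ^ (-z)),
    tsum_subtype {p : ℕ | p.Prime ∧ s p = 1} (fun n : ℕ => ((n:ℕ):ℝ) ^ (-z)),
    tsum_subtype {p : ℕ | p.Prime ∧ s p = -1} (fun n : ℕ => ((n:ℕ):ℝ) ^ (-z)),
    ← Summable.tsum_add ((hsb hz).indicator _) ((hsb hz).indicator _)]
  congr 1; funext n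
  by_cases hp : n.Prime
  · rcases hval n with h | h | h <;>
      simp only [Set.indicator_apply, Set.mem_setOf_eq, h, hp, true_and, and_true] <;> norm_num
  · simp only [Set.indicator_apply, Set.mem_setOf_eq, hp, false_and]
    norm_num

lemma split_signed_primes (hval : ∀ n : ℕ, s n = -1 ∨ s n = 0 ∨ s n = 1) (hz : 1 < z) :
    ∑' p : Nat.Primes, s (p:ℕ) * (((p:ℕ):ℕ):ℝ) ^ (-z)
      = (∑' p : {p : ℕ | p.Prime ∧ s p = 1}, ((p:ℕ):ℝ) ^ (-z))
        - ∑' p : {p : ℕ | p.Prime ∧ s p = -1}, ((p:ℕ):ℝ) ^ (-z) := by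
  have : ∑' p : Nat.Primes, s (p:ℕ) * (((p:ℕ):ℕ):ℝ) ^ (-z)
      = ∑' p : {p : ℕ | p.Prime}, s (p:ℕ) * (((p:ℕ):ℕ):ℝ) ^ (-z) := rfl
  rw [this, tsum_subtype {p : ℕ | p.Prime} (fun n : ℕ => s n * ((n:ℕ):ℝ) ^ (-z)),
    tsum_subtype {p : ℕ | p.Prime ∧ s p = 1} (fun n : ℕ => ((n:ℕ):ℝ) ^ (-z)),
    tsum_subtype {p : ℕ | p.Prime ∧ s p = -1} (fun n : ℕ => ((n:ℕ):ℝ) ^ (-z)),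
    ← Summable.tsum_sub ((hsb hz).indicator _) ((hsb hz).indicator _)]
  congr 1; funext n
  by_cases hp : n.Prime
  · rcases hval n with h | h | h <;>
      simp only [Set.indicator_apply, Set.mem_setOf_eq, h, hp, true_and, and_true] <;> norm_num
  · simp only [Set.indicator_apply, Set.mem_setOf_eq, hp, false_and]
    norm_num

end
end BKaux

namespace BKaux
open Filter

lemma cont_rpow_neg {x : ℝ} (hx : 0 < x) : Continuous fun z : ℝ => x ^ (-z) := by
  have : (fun z : ℝ => x ^ (-z)) = fun z => Real.exp (Real.log x * (-z)) :=
    funext fun z => Real.rpow_def_of_pos hx _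
  rw [this]; continuity

section
variable {u : ℕ → ℝ} {z : ℝ} {p : ℕ}

lemma q_le_inv (hp2 : 2 ≤ p) (hz : 1 ≤ z) : (p:ℝ) ^ (-z) ≤ (p:ℝ)⁻¹ := by
  rw [← Real.rpow_neg_one (p:ℝ)]
  exact Real.rpow_le_rpow_of_exponent_le (by exact_mod_cast hp2.trans' one_le_two)
    (by linarith)

lemma q_sq_le (hp2 : 2 ≤ p) (hz : 1 ≤ z) : ((p:ℝ) ^ (-z)) ^ 2 ≤ (p:ℝ) ^ (-(2:ℝ)) := by
  have h1 := q_le_inv hp2 hz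
  have h0 : (0:ℝ) ≤ (p:ℝ) ^ (-z) := Real.rpow_nonneg (Nat.cast_nonneg p) _
  have h2 : ((p:ℝ)⁻¹) ^ 2 = (p:ℝ) ^ (-(2:ℝ)) := by
    rw [← Real.rpow_neg_one (p:ℝ), ← Real.rpow_natCast ((p:ℝ) ^ (-(1:ℝ))) 2,
      ← Real.rpow_mul (Nat.cast_nonneg p)]
    norm_num
  calc ((p:ℝ) ^ (-z)) ^ 2 ≤ ((p:ℝ)⁻¹) ^ 2 := by
        apply pow_le_pow_left₀ h0 h1
  _ = (p:ℝ) ^ (-(2:ℝ)) := h2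

lemma tendsto_Yf (hp2 : 2 ≤ p) (hu : ∀ n, |u n| ≤ 1) :
    Tendsto (fun z : ℝ => Yf u z p) (nhdsWithin 1 (Set.Ioi 1)) (nhds (Yf u 1 p)) := by
  have hple : (1:ℝ) < (p:ℝ) := by exact_mod_cast by omega
  have hinv : (p:ℝ)⁻¹ < 1 := inv_lt_one_of_one_lt₀ hple
  have hinv0 : (0:ℝ) ≤ (p:ℝ)⁻¹ := by positivity
  apply tendsto_tsum_of_dominated_convergence
    (bound := fun e : ℕ => ((p:ℝ)⁻¹) ^ (e+1))
  · exact ((summable_geometric_of_lt_one hinv0 hinv).mul_left _).congr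
      (fun e => by rw [← pow_succ'])
  · intro e
    have hppos : (0:ℝ) < ((p ^ (e+1) : ℕ):ℝ) := by
      have : 0 < p ^ (e+1) := pow_pos (by omega) _
      exact_mod_cast this
    exact ((cont_rpow_neg hppos).tendsto 1).mono_left nhdsWithin_le_nhds |>.const_mul _
  · filter_upwards [eventually_mem_nhdsWithin] with z hz e
    rw [Set.mem_Ioi] at hz
    rw [Real.norm_eq_abs]
    refine (term_abs_le hu e).trans ?_
    exact pow_le_pow_left₀ (Real.rpow_nonneg (Nat.cast_nonneg p) _)
      (q_le_inv hp2 (le_of_lt hz)) _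

lemma tendsto_D (hu : ∀ n, |u n| ≤ 1) (hpos : ∀ n, 0 ≤ u n) :
    Tendsto (fun z : ℝ => ∑' p : Nat.Primes,
        (Real.log (1 + Yf u z (p:ℕ)) - u (p:ℕ) * ((p:ℕ):ℝ) ^ (-z)))
      (nhdsWithin 1 (Set.Ioi 1))
      (nhds (∑' p : Nat.Primes,
        (Real.log (1 + Yf u 1 (p:ℕ)) - u (p:ℕ) * ((p:ℕ):ℝ) ^ (-(1:ℝ))))) := by
  apply tendsto_tsum_of_dominated_convergence
    (bound := fun p : Nat.Primes => 6 * ((p:ℕ):ℝ) ^ (-(2:ℝ)))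
  · exact summable_primes_rpow_two.mul_left 6
  · intro p
    have hp2 : 2 ≤ (p:ℕ) := p.2.two_le
    have hq1 : ((p:ℕ):ℝ) ^ (-(1:ℝ)) < 1 := by
      rw [Real.rpow_neg_one]
      exact inv_lt_one_of_one_lt₀ (by exact_mod_cast by omega)
    have hYpos : (0:ℝ) < 1 + Yf u 1 (p:ℕ) := by
      have := Yf_nonneg (u := u) (z := 1) (p := (p:ℕ)) (by omega) hq1 hu hpos
      linarith
    have h1 : Tendsto (fun z : ℝ => Real.log (1 + Yf u z (p:ℕ)))
        (nhdsWithin 1 (Set.Ioi 1)) (nhds (Real.log (1 + Yf u 1 (p:ℕ)))) :=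
      ((Real.continuousAt_log (by linarith)).tendsto).comp
        (tendsto_const_nhds.add (tendsto_Yf hp2 hu))
    have h2 : Tendsto (fun z : ℝ => u (p:ℕ) * ((p:ℕ):ℝ) ^ (-z))
        (nhdsWithin 1 (Set.Ioi 1)) (nhds (u (p:ℕ) * ((p:ℕ):ℝ) ^ (-(1:ℝ)))) := by
      have hppos : (0:ℝ) < ((p:ℕ):ℝ) := by exact_mod_cast (by omega : 0 < (p:ℕ))
      exact (((cont_rpow_neg hppos).tendsto 1).mono_left nhdsWithin_le_nhds).const_mul _
    exact h1.sub h2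
  · filter_upwards [eventually_mem_nhdsWithin] with z hz p
    rw [Set.mem_Ioi] at hz
    rw [Real.norm_eq_abs]
    refine (log_local_sub_bound p.2.two_le hz hu hpos).trans ?_
    have := q_sq_le (p := (p:ℕ)) p.2.two_le (le_of_lt hz)
    linarith

end
end BKaux

namespace BKaux
section
variable {u : ℕ → ℝ} {z : ℝ}

lemma summable_coef (hz : 1 < z) (hu : ∀ n, |u n| ≤ 1) :
    Summable (fun p : Nat.Primes => u (p:ℕ) * ((p:ℕ):ℝ) ^ (-z)) := by
  refine Summable.of_norm_bounded (summable_primes_rpow hz) (fun p => ?_)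
  have h0 : (0:ℝ) ≤ ((p:ℕ):ℝ) ^ (-z) := Real.rpow_nonneg (Nat.cast_nonneg _) _
  rw [Real.norm_eq_abs, abs_mul, abs_of_nonneg h0]
  exact mul_le_of_le_one_left h0 (hu _)

lemma summable_dp (hz : 1 < z) (hu : ∀ n, |u n| ≤ 1) (hpos : ∀ n, 0 ≤ u n) :
    Summable (fun p : Nat.Primes =>
      Real.log (1 + Yf u z (p:ℕ)) - u (p:ℕ) * ((p:ℕ):ℝ) ^ (-z)) := by
  refine Summable.of_norm_bounded (g := fun p : Nat.Primes => 6 * ((p:ℕ):ℝ) ^ (-(2:ℝ)))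
    (summable_primes_rpow_two.mul_left 6) (fun p => ?_)
  rw [Real.norm_eq_abs]
  refine (log_local_sub_bound p.2.two_le hz hu hpos).trans ?_
  have := q_sq_le (p := (p:ℕ)) p.2.two_le (le_of_lt hz)
  linarith

lemma sum_log_split (hz : 1 < z) (hu : ∀ n, |u n| ≤ 1) (hpos : ∀ n, 0 ≤ u n) :
    ∑' p : Nat.Primes, Real.log (1 + Yf u z (p:ℕ))
      = (∑' p : Nat.Primes, u (p:ℕ) * ((p:ℕ):ℝ) ^ (-z))
        + ∑' p : Nat.Primes,
            (Real.log (1 + Yf u z (p:ℕ)) - u (p:ℕ) * ((p:ℕ):ℝ) ^ (-z)) := by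
  rw [← Summable.tsum_add (summable_coef hz hu) (summable_dp hz hu hpos)]
  congr 1; funext p; ring

lemma SG_le (hz : 1 < z) (hu : ∀ n, |u n| ≤ 1) :
    ∑' p : Nat.Primes, Real.log (1 + Yf u z (p:ℕ))
      ≤ (∑' p : Nat.Primes, u (p:ℕ) * ((p:ℕ):ℝ) ^ (-z))
        + 2 * ∑' p : Nat.Primes, ((p:ℕ):ℝ) ^ (-(2:ℝ)) := by
  have hpt : ∀ p : Nat.Primes, Real.log (1 + Yf u z (p:ℕ))
      ≤ u (p:ℕ) * ((p:ℕ):ℝ) ^ (-z) + 2 * ((p:ℕ):ℝ) ^ (-(2:ℝ)) := by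
    intro p
    have h1 := log_local_le p.2.two_le hz hu
    have h2 := q_sq_le (p := (p:ℕ)) p.2.two_le (le_of_lt hz)
    linarith
  have hs2 : Summable (fun p : Nat.Primes =>
      u (p:ℕ) * ((p:ℕ):ℝ) ^ (-z) + 2 * ((p:ℕ):ℝ) ^ (-(2:ℝ))) :=
    (summable_coef hz hu).add (summable_primes_rpow_two.mul_left 2)
  refine (Summable.tsum_le_tsum hpt (summable_log_local hz hu) hs2).trans ?_
  rw [Summable.tsum_add (summable_coef hz hu) (summable_primes_rpow_two.mul_left 2), tsum_mul_left]

end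
end BKaux

namespace BKaux
open Filter

lemma regular_real {S : Set ℕ} {δ : ℝ} (h : IsRegularPrimeSet S δ) :
    ∃ c : ℝ, Tendsto (fun z : ℝ => (∑' p : S, ((p:ℕ):ℝ) ^ (-z)) - δ * Real.log (1/(z-1)))
      (nhdsWithin 1 (Set.Ioi 1)) (nhds c) := by
  obtain ⟨-, U, g, hU, hsub, hg, hid⟩ := h
  have h1U : (1:ℂ) ∈ U := hsub (by simp)
  have hcont : ContinuousAt g 1 := (hg.differentiableAt (hU.mem_nhds h1U)).continuousAt
  refine ⟨(g 1).re, ?_⟩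
  have hident : ∀ z : ℝ, z ∈ Set.Ioi (1:ℝ) →
      (∑' p : S, ((p:ℕ):ℝ) ^ (-z)) - δ * Real.log (1/(z-1)) = (g z).re := by
    intro z hz
    rw [Set.mem_Ioi] at hz
    have hz' : 1 < ((z:ℂ)).re := by simpa using hz
    have hkey := hid z hz'
    have hL : (∑' p : S, ((p:ℕ):ℂ) ^ (-(z:ℂ))) = ((∑' p : S, ((p:ℕ):ℝ) ^ (-z) : ℝ) : ℂ) := by
      rw [Complex.ofReal_tsum]
      congr 1; funext p
      rw [show (-(z:ℂ)) = ((-z : ℝ) : ℂ) by push_cast; ring,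
        show (((p:ℕ):ℕ):ℂ) = ((((p:ℕ):ℕ):ℝ):ℂ) by push_cast; ring,
        ← Complex.ofReal_cpow (Nat.cast_nonneg _) (-z)]
    have hR : ((1:ℂ)/((z:ℂ)-1)) = ((1/(z-1) : ℝ) : ℂ) := by push_cast; ring
    rw [hL, hR, ← Complex.ofReal_log (le_of_lt (one_div_pos.mpr (sub_pos.mpr hz)))] at hkey
    have hre := congrArg Complex.re hkey
    simp only [Complex.ofReal_re, Complex.add_re, Complex.mul_re, Complex.ofReal_im,
      Complex.ofReal_re] at hre
    rw [hre]; ring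
  have htz : Tendsto (fun z : ℝ => ((z:ℝ):ℂ)) (nhdsWithin 1 (Set.Ioi 1)) (nhds (1:ℂ)) := by
    have := (Complex.continuous_ofReal.tendsto 1).mono_left
      (nhdsWithin_le_nhds (s := Set.Ioi (1:ℝ)))
    simpa using this
  have hmain : Tendsto (fun z : ℝ => (g (z:ℂ)).re) (nhdsWithin 1 (Set.Ioi 1))
      (nhds ((g 1).re)) :=
    (Complex.continuous_re.tendsto _).comp (hcont.tendsto.comp htz)
  refine hmain.congr' ?_
  filter_upwards [eventually_mem_nhdsWithin] with z hz
  exact (hident z hz).symm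


end BKaux

namespace BKaux
open Filter

lemma F_formula (s : ℕ → ℝ) (hone : s 1 = 1)
    (hmul : ∀ m n : ℕ, Nat.Coprime m n → s (m * n) = s m * s n)
    (hval : ∀ n : ℕ, s n = -1 ∨ s n = 0 ∨ s n = 1) {z : ℝ} (hz : 1 < z) :
    (z - 1) * ∑' n : {n : ℕ | s n ≠ 0}, ((n:ℕ):ℝ) ^ (-z)
      = Real.exp ((((∑' p : {p : ℕ | p.Prime ∧ s p = 1}, ((p:ℕ):ℝ) ^ (-z))
            - 1/2 * Real.log (1/(z-1)))
          + ((∑' p : {p : ℕ | p.Prime ∧ s p = -1}, ((p:ℕ):ℝ) ^ (-z))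
            - 1/2 * Real.log (1/(z-1))))
        + ∑' p : Nat.Primes,
            (Real.log (1 + Yf (fun n => |s n|) z (p:ℕ)) - |s (p:ℕ)| * ((p:ℕ):ℝ) ^ (-z))) := by
  have hb : ∀ n : ℕ, |(fun n => |s n|) n| ≤ 1 := by
    intro n; rcases hval n with h | h | h <;> simp [h]
  have hpos : ∀ n : ℕ, (0:ℝ) ≤ (fun n => |s n|) n := fun n => abs_nonneg _
  have h1 : (fun n => |s n|) 1 = 1 := by simp [hone]
  have hm : ∀ m n : ℕ, Nat.Coprime m n →
      (fun n => |s n|) (m * n) = (fun n => |s n|) m * (fun n => |s n|) n := by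
    intro m n h; simp only; rw [hmul m n h, abs_mul]
  have e1 := abs_eq_ne_nat (z := z) hval
  have e2 := euler_exp (u := fun n => |s n|) hz h1 hm hb
  have e3 := sum_log_split (u := fun n => |s n|) hz hb hpos
  have e4 := split_abs_primes hval hz
  beta_reduce at e2 e3
  calc (z - 1) * ∑' n : {n : ℕ | s n ≠ 0}, ((n:ℕ):ℝ) ^ (-z)
      = Real.exp (Real.log (z-1))
        * Real.exp (∑' p : Nat.Primes, Real.log (1 + Yf (fun n => |s n|) z (p:ℕ))) := by
        rw [Real.exp_log (by linarith), ← e1, e2]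
  _ = Real.exp (Real.log (z-1)
        + ∑' p : Nat.Primes, Real.log (1 + Yf (fun n => |s n|) z (p:ℕ))) :=
        (Real.exp_add _ _).symm
  _ = _ := by
        rw [e3, e4]
        congr 1
        rw [show Real.log (1/(z-1)) = -Real.log (z-1) by rw [one_div, Real.log_inv]]
        ring

end BKaux

open BKaux Filter in
/-- Corollary 5.2 (abstracted): let `s : ℕ → ℝ` be multiplicative with values in
`{-1, 0, 1}` such that `{p : s(p) = 1}` and `{p : s(p) = -1}` are regular sets of
primes of Dirichlet density `1/2` and `{p : s(p) = 0}` is a regular set of primes of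
Dirichlet density `0`. Then `{n : s(n) = 1}` and `{n : s(n) = -1}` have equal positive
Dedekind–Dirichlet densities, each half of the Dedekind–Dirichlet density of
`{n : s(n) ≠ 0}`, which exists and is positive. -/
theorem bruinier_kohnen_sign_equidistribution (s : ℕ → ℝ)
    (hone : s 1 = 1)
    (hmul : ∀ m n : ℕ, Nat.Coprime m n → s (m * n) = s m * s n)
    (hval : ∀ n : ℕ, s n = -1 ∨ s n = 0 ∨ s n = 1)
    (hplus : IsRegularPrimeSet {p : ℕ | p.Prime ∧ s p = 1} (1 / 2))
    (hminus : IsRegularPrimeSet {p : ℕ | p.Prime ∧ s p = -1} (1 / 2))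
    (hzero : IsRegularPrimeSet {p : ℕ | p.Prime ∧ s p = 0} 0) :
    ∃ A : ℝ, 0 < A ∧
      HasDedekindDirichletDensity {n : ℕ | s n ≠ 0} A ∧
      HasDedekindDirichletDensity {n : ℕ | s n = 1} (A / 2) ∧
      HasDedekindDirichletDensity {n : ℕ | s n = -1} (A / 2) := by
  classical
  have hsval : ∀ n, |s n| ≤ 1 := fun n => by rcases hval n with h | h | h <;> rw [h] <;> norm_num
  have hb : ∀ n : ℕ, |(fun n => |s n|) n| ≤ 1 := fun n => by simpa using hsval n
  have hpos : ∀ n : ℕ, (0:ℝ) ≤ (fun n => |s n|) n := fun n => abs_nonneg _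
  obtain ⟨cp, hcp⟩ := regular_real hplus
  obtain ⟨cm, hcm⟩ := regular_real hminus
  have hDt := tendsto_D (u := fun n => |s n|) hb hpos
  set D1 := ∑' p : Nat.Primes,
      (Real.log (1 + Yf (fun n => |s n|) 1 (p:ℕ))
        - (fun n => |s n|) (p:ℕ) * ((p:ℕ):ℝ) ^ (-(1:ℝ))) with hD1def
  have hexp : Tendsto (fun z : ℝ =>
      Real.exp ((((∑' p : {p : ℕ | p.Prime ∧ s p = 1}, ((p:ℕ):ℝ) ^ (-z))
            - 1/2 * Real.log (1/(z-1)))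
          + ((∑' p : {p : ℕ | p.Prime ∧ s p = -1}, ((p:ℕ):ℝ) ^ (-z))
            - 1/2 * Real.log (1/(z-1))))
        + ∑' p : Nat.Primes,
            (Real.log (1 + Yf (fun n => |s n|) z (p:ℕ)) - |s (p:ℕ)| * ((p:ℕ):ℝ) ^ (-z))))
      (nhdsWithin 1 (Set.Ioi 1)) (nhds (Real.exp ((cp + cm) + D1))) := by
    exact (Real.continuous_exp.tendsto _).comp ((hcp.add hcm).add hDt)
  have hFt : Tendsto (fun z : ℝ => (z - 1) * ∑' n : {n : ℕ | s n ≠ 0}, ((n:ℕ):ℝ) ^ (-z))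
      (nhdsWithin 1 (Set.Ioi 1)) (nhds (Real.exp ((cp + cm) + D1))) := by
    refine hexp.congr' ?_
    filter_upwards [eventually_mem_nhdsWithin] with z hz
    exact (F_formula s hone hmul hval (Set.mem_Ioi.mp hz)).symm
  set K := ∑' p : Nat.Primes, ((p:ℕ):ℝ) ^ (-(2:ℝ)) with hKdef
  have hzt : Tendsto (fun z : ℝ => z - 1) (nhdsWithin 1 (Set.Ioi 1)) (nhds 0) := by
    have h := ((continuous_sub_right (1:ℝ)).tendsto 1).mono_left
      (nhdsWithin_le_nhds (s := Set.Ioi (1:ℝ)))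
    simpa using h
  have hPSdiff : Tendsto (fun z : ℝ =>
      (∑' p : {p : ℕ | p.Prime ∧ s p = 1}, ((p:ℕ):ℝ) ^ (-z))
        - ∑' p : {p : ℕ | p.Prime ∧ s p = -1}, ((p:ℕ):ℝ) ^ (-z))
      (nhdsWithin 1 (Set.Ioi 1)) (nhds (cp - cm)) := by
    have h := hcp.sub hcm
    exact h.congr (fun z => by ring)
  have heven : ∀ᶠ z in nhdsWithin (1:ℝ) (Set.Ioi 1),
      (∑' p : {p : ℕ | p.Prime ∧ s p = 1}, ((p:ℕ):ℝ) ^ (-z))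
        - (∑' p : {p : ℕ | p.Prime ∧ s p = -1}, ((p:ℕ):ℝ) ^ (-z)) < (cp - cm) + 1 :=
    hPSdiff.eventually_lt_const (by linarith)
  have hGt : Tendsto (fun z : ℝ => (z - 1) * ∑' n : ℕ, s n * ((n:ℕ):ℝ) ^ (-z))
      (nhdsWithin 1 (Set.Ioi 1)) (nhds 0) := by
    have hM : Tendsto (fun z : ℝ => (z - 1) * Real.exp ((cp - cm) + 1 + 2 * K))
        (nhdsWithin 1 (Set.Ioi 1)) (nhds 0) := by
      simpa using hzt.mul_const (Real.exp ((cp - cm) + 1 + 2 * K))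
    apply squeeze_zero' ?_ ?_ hM
    · filter_upwards [eventually_mem_nhdsWithin] with z hz
      rw [Set.mem_Ioi] at hz
      have hG := euler_exp (u := s) hz hone (fun m n h => hmul m n h) hsval
      rw [hG]
      exact mul_nonneg (by linarith) (Real.exp_pos _).le
    · filter_upwards [eventually_mem_nhdsWithin, heven] with z hz hlt
      rw [Set.mem_Ioi] at hz
      have hG := euler_exp (u := s) hz hone (fun m n h => hmul m n h) hsval
      rw [hG]
      have hSG := SG_le (u := s) hz hsval
      rw [split_signed_primes hval hz] at hSG
      have hle : Real.exp (∑' p : Nat.Primes, Real.log (1 + Yf s z (p:ℕ)))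
          ≤ Real.exp ((cp - cm) + 1 + 2 * K) := by
        apply Real.exp_le_exp.mpr
        linarith
      exact mul_le_mul_of_nonneg_left hle (by linarith)
  refine ⟨Real.exp ((cp + cm) + D1), Real.exp_pos _, hFt, ?_, ?_⟩
  · have h2 : Tendsto (fun z : ℝ =>
        ((z - 1) * (∑' n : {n : ℕ | s n ≠ 0}, ((n:ℕ):ℝ) ^ (-z))
          + (z - 1) * ∑' n : ℕ, s n * ((n:ℕ):ℝ) ^ (-z)) / 2)
        (nhdsWithin 1 (Set.Ioi 1)) (nhds ((Real.exp ((cp + cm) + D1) + 0) / 2)) :=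
      (hFt.add hGt).div_const 2
    rw [show (Real.exp ((cp + cm) + D1) + 0) / 2 = Real.exp ((cp + cm) + D1) / 2 by ring] at h2
    refine h2.congr' ?_
    filter_upwards [eventually_mem_nhdsWithin] with z hz
    rw [Set.mem_Ioi] at hz
    have hA : (∑' n : {n : ℕ | s n ≠ 0}, ((n:ℕ):ℝ) ^ (-z))
        = (∑' n : {n : ℕ | s n = 1}, ((n:ℕ):ℝ) ^ (-z))
          + ∑' n : {n : ℕ | s n = -1}, ((n:ℕ):ℝ) ^ (-z) :=
      (abs_eq_ne_nat hval).symm.trans (split_abs_nat hval hz)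
    have hB := split_signed_nat hval hz
    rw [hA, hB]
    ring
  · have h2 : Tendsto (fun z : ℝ =>
        ((z - 1) * (∑' n : {n : ℕ | s n ≠ 0}, ((n:ℕ):ℝ) ^ (-z))
          - (z - 1) * ∑' n : ℕ, s n * ((n:ℕ):ℝ) ^ (-z)) / 2)
        (nhdsWithin 1 (Set.Ioi 1)) (nhds ((Real.exp ((cp + cm) + D1) - 0) / 2)) :=
      (hFt.sub hGt).div_const 2
    rw [show (Real.exp ((cp + cm) + D1) - 0) / 2 = Real.exp ((cp + cm) + D1) / 2 by ring] at h2
    refine h2.congr' ?_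
    filter_upwards [eventually_mem_nhdsWithin] with z hz
    rw [Set.mem_Ioi] at hz
    have hA : (∑' n : {n : ℕ | s n ≠ 0}, ((n:ℕ):ℝ) ^ (-z))
        = (∑' n : {n : ℕ | s n = 1}, ((n:ℕ):ℝ) ^ (-z))
          + ∑' n : {n : ℕ | s n = -1}, ((n:ℕ):ℝ) ^ (-z) :=
      (abs_eq_ne_nat hval).symm.trans (split_abs_nat hval hz)
    have hB := split_signed_nat hval hz
    rw [hA, hB]
    ring
end

section
/- Let t : ℕ → ℝ be a multiplicative arithmetic function taking values in {0, 1}, and suppose that {p prime : t(p) = 0} is a regular set of primes of Dirichlet density 0. Let T(z) := ∑_{n=1}^{∞} t(n)·n^{−z} for Re z > 1. Then the quotient A(z) := T(z)/ζ(z) extends to a holomorphic function on an open neighborhood of the closed half-plane {z ∈ ℂ : Re z ≥ 1}, its value A(1) at z = 1 is positive, and the set {n ∈ ℕ : t(n) = 1} has Dedekind–Dirichlet density equal to A(1). -/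
open Filter Set

set_option maxHeartbeats 1000000

namespace DDAux

noncomputable def cf (t : ℕ → ℝ) (p : ℕ) : ℕ → ℝ
  | 0 => 1
  | (k+1) => t (p ^ (k+1)) - t (p ^ k)

@[simp] lemma cf_zero (t : ℕ → ℝ) (p : ℕ) : cf t p 0 = 1 := rfl
lemma cf_succ (t : ℕ → ℝ) (p : ℕ) (k : ℕ) : cf t p (k+1) = t (p ^ (k+1)) - t (p ^ k) := rfl

lemma abs_cf_le {t : ℕ → ℝ} (hval : ∀ n, t n = 0 ∨ t n = 1) (p : ℕ) (k : ℕ) :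
    |cf t p k| ≤ 1 := by
  cases k with
  | zero => simp
  | succ k =>
    rcases hval (p ^ (k+1)) with h1 | h1 <;> rcases hval (p ^ k) with h2 | h2 <;>
      simp [cf_succ, h1, h2]

noncomputable def G (t : ℕ → ℝ) (p : ℕ) (z : ℂ) : ℂ :=
  ∑' k : ℕ, (cf t p k : ℂ) * ((p : ℂ) ^ (-z)) ^ k

noncomputable def F (t : ℕ → ℝ) (p : ℕ) (z : ℂ) : ℂ :=
  ∑' k : ℕ, (t (p ^ k) : ℂ) * ((p : ℂ) ^ (-z)) ^ k

lemma norm_cpow_neg {p : ℕ} (hp : 0 < p) (z : ℂ) : ‖(p:ℂ) ^ (-z)‖ = (p:ℝ) ^ (-z.re) := by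
  simpa using Complex.norm_natCast_cpow_of_pos hp (-z)

lemma summable_coef_geom {c : ℕ → ℝ} (hc : ∀ k, |c k| ≤ 1) {x : ℂ} (hx : ‖x‖ < 1) :
    Summable (fun k => (c k : ℂ) * x ^ k) := by
  refine Summable.of_norm (Summable.of_nonneg_of_le (fun k => norm_nonneg _) (fun k => ?_)
    (summable_geometric_of_lt_one (norm_nonneg x) hx))
  rw [norm_mul, norm_pow]
  calc ‖((c k : ℝ) : ℂ)‖ * ‖x‖ ^ k ≤ 1 * ‖x‖ ^ k := by
        gcongr
        · simpa using hc k
  _ = ‖x‖ ^ k := one_mul _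

lemma tsum_tail_norm_le {c : ℕ → ℝ} (hc : ∀ k, |c k| ≤ 1) {x : ℂ} (hx : ‖x‖ < 1) (m : ℕ) :
    ‖∑' k : ℕ, (c (k + m) : ℂ) * x ^ (k + m)‖ ≤ ‖x‖ ^ m / (1 - ‖x‖) := by
  have hg : Summable (fun k : ℕ => ‖x‖ ^ k) := summable_geometric_of_lt_one (norm_nonneg x) hx
  have hs : Summable (fun k : ℕ => ‖x‖ ^ (k + m)) := by
    simpa [pow_add] using hg.mul_right (‖x‖ ^ m)
  have hsum : Summable (fun k : ℕ => ‖(c (k + m) : ℂ) * x ^ (k + m)‖) := by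
    refine Summable.of_nonneg_of_le (fun k => norm_nonneg _) (fun k => ?_) hs
    rw [norm_mul, norm_pow]
    calc ‖((c (k+m) : ℝ) : ℂ)‖ * ‖x‖ ^ (k+m) ≤ 1 * ‖x‖ ^ (k+m) := by
          gcongr
          · simpa using hc (k+m)
    _ = ‖x‖ ^ (k+m) := one_mul _
  have h1 := norm_tsum_le_tsum_norm hsum
  have h2 : ∑' k : ℕ, ‖(c (k + m) : ℂ) * x ^ (k + m)‖ ≤ ∑' k : ℕ, ‖x‖ ^ (k + m) := by
    refine Summable.tsum_le_tsum (fun k => ?_) hsum hs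
    rw [norm_mul, norm_pow]
    calc ‖((c (k+m) : ℝ) : ℂ)‖ * ‖x‖ ^ (k+m) ≤ 1 * ‖x‖ ^ (k+m) := by
          gcongr
          · simpa using hc (k+m)
    _ = ‖x‖ ^ (k+m) := one_mul _
  have h3 : ∑' k : ℕ, ‖x‖ ^ (k + m) = ‖x‖ ^ m / (1 - ‖x‖) := by
    simp_rw [pow_add]
    rw [tsum_mul_right, tsum_geometric_of_lt_one (norm_nonneg x) hx]
    rw [div_eq_mul_inv, mul_comm]
  linarith [h1, h2, h3.le, h3.ge]

lemma rpow_neg_le {p : ℕ} {b : ℝ} (hb : 0 < b) (hp : 1 ≤ p)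
    (h : (1 / b) ^ (20:ℕ) ≤ (p:ℝ) ^ (19:ℕ)) {σ : ℝ} (hσ : 19/20 ≤ σ) :
    (p:ℝ) ^ (-σ) ≤ b := by
  have hp1 : (1:ℝ) ≤ (p:ℝ) := by exact_mod_cast hp
  have h1 : (p:ℝ) ^ (-σ) ≤ (p:ℝ) ^ (-((19:ℝ)/20)) :=
    Real.rpow_le_rpow_of_exponent_le hp1 (by linarith)
  refine h1.trans ?_
  have hpos : 0 < (p:ℝ) ^ ((19:ℝ)/20) := Real.rpow_pos_of_pos (by linarith) _
  rw [Real.rpow_neg (by linarith)]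
  rw [inv_le_comm₀ hpos hb]
  refine le_of_pow_le_pow_left₀ (n := 20) (by norm_num) hpos.le ?_
  have : ((p:ℝ) ^ ((19:ℝ)/20)) ^ (20:ℕ) = (p:ℝ) ^ (19:ℕ) := by
    rw [← Real.rpow_natCast ((p:ℝ) ^ ((19:ℝ)/20)) 20, ← Real.rpow_mul (by linarith)]
    norm_num
  rw [this]
  simpa [one_div] using h


section
variable {t : ℕ → ℝ}

lemma abs_t_le (hval : ∀ n, t n = 0 ∨ t n = 1) (n : ℕ) : |t n| ≤ 1 := by
  rcases hval n with h | h <;> simp [h]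

lemma x_norm_lt_one {p : ℕ} (hp : 2 ≤ p) {z : ℂ} (hz : 0 < z.re) :
    ‖(p:ℂ) ^ (-z)‖ < 1 := by
  rw [norm_cpow_neg (by omega)]
  exact Real.rpow_lt_one_of_one_lt_of_neg (by exact_mod_cast hp.trans_lt' one_lt_two)
    (by linarith)

lemma hasSum_G (hval : ∀ n, t n = 0 ∨ t n = 1) {p : ℕ} {z : ℂ} (hx : ‖(p:ℂ) ^ (-z)‖ < 1) :
    HasSum (fun k => (cf t p k : ℂ) * ((p:ℂ) ^ (-z)) ^ k) (G t p z) :=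
  (summable_coef_geom (abs_cf_le hval p) hx).hasSum

lemma G_tail (hval : ∀ n, t n = 0 ∨ t n = 1) {p : ℕ} {z : ℂ} (hx : ‖(p:ℂ) ^ (-z)‖ < 1) (m : ℕ) :
    G t p z = (∑ k ∈ Finset.range m, (cf t p k : ℂ) * ((p:ℂ) ^ (-z)) ^ k)
      + ∑' k : ℕ, (cf t p (k + m) : ℂ) * ((p:ℂ) ^ (-z)) ^ (k + m) :=
  (Summable.sum_add_tsum_nat_add m (summable_coef_geom (abs_cf_le hval p) hx)).symm

lemma norm_G_sub_one_le (hval : ∀ n, t n = 0 ∨ t n = 1) {p : ℕ} {z : ℂ}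
    (hx : ‖(p:ℂ) ^ (-z)‖ < 1) :
    ‖G t p z - 1‖ ≤ ‖(p:ℂ) ^ (-z)‖ / (1 - ‖(p:ℂ) ^ (-z)‖) := by
  have h2 : G t p z - 1 = ∑' k : ℕ, (cf t p (k + 1) : ℂ) * ((p:ℂ) ^ (-z)) ^ (k + 1) := by
    rw [G_tail hval hx 1]
    simp only [Finset.range_one, Finset.sum_singleton, pow_zero]
    rw [show cf t p 0 = 1 from rfl]
    push_cast
    ring
  rw [h2]
  simpa using tsum_tail_norm_le (abs_cf_le hval p) hx 1

lemma natCast_pow_cpow (p : ℕ) (e : ℕ) (w : ℂ) :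
    ((p ^ e : ℕ) : ℂ) ^ w = ((p:ℂ) ^ w) ^ e := by
  rw [Nat.cast_pow, ← Complex.natCast_cpow_natCast_mul, Complex.cpow_nat_mul]

lemma G_eq_F (hone : t 1 = 1) (hval : ∀ n, t n = 0 ∨ t n = 1) {p : ℕ} {z : ℂ}
    (hx : ‖(p:ℂ) ^ (-z)‖ < 1) :
    G t p z = (1 - (p:ℂ) ^ (-z)) * F t p z := by
  set x : ℂ := (p:ℂ) ^ (-z) with hxdef
  have hF : HasSum (fun k => ((t (p ^ k) : ℝ) : ℂ) * x ^ k) (F t p z) :=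
    (summable_coef_geom (fun k => abs_t_le hval (p ^ k)) hx).hasSum
  have hxF : HasSum (fun k => ((t (p ^ k) : ℝ) : ℂ) * x ^ (k + 1)) (x * F t p z) := by
    have h := hF.mul_left x
    have hfun : (fun k => x * (((t (p ^ k) : ℝ) : ℂ) * x ^ k))
        = fun k => ((t (p ^ k) : ℝ) : ℂ) * x ^ (k + 1) := by
      funext k; ring
    rwa [hfun] at h
  set d : ℕ → ℂ := fun k => if k = 0 then 0 else ((t (p ^ (k - 1)) : ℝ) : ℂ) * x ^ k with hd
  have hdsum : HasSum d (x * F t p z) := by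
    have h1 : HasSum (fun n => d (n + 1)) (x * F t p z) := by
      have hfun : (fun n => d (n + 1))
          = fun k => ((t (p ^ k) : ℝ) : ℂ) * x ^ (k + 1) := by
        funext k; simp [hd]
      rw [hfun]; exact hxF
    have h2 := (hasSum_nat_add_iff (f := d) 1).mp h1
    simpa [hd] using h2
  have hsub : HasSum (fun k => ((t (p ^ k) : ℝ) : ℂ) * x ^ k - d k)
      (F t p z - x * F t p z) := hF.sub hdsum
  have hfun : (fun k => ((t (p ^ k) : ℝ) : ℂ) * x ^ k - d k)
      = fun k => (cf t p k : ℂ) * x ^ k := by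
    funext k
    cases k with
    | zero => simp [hd, cf, hone]
    | succ k =>
      simp only [hd, cf, Nat.succ_ne_zero, if_false, Nat.add_sub_cancel]
      push_cast
      ring
  rw [hfun] at hsub
  have hG : G t p z = F t p z - x * F t p z := hsub.tsum_eq
  rw [hG]; ring

lemma F_eq_euler (p : ℕ) (z : ℂ) :
    (∑' e : ℕ, ((t (p ^ e) : ℝ) : ℂ) * ((p ^ e : ℕ) : ℂ) ^ (-z)) = F t p z := by
  unfold F
  congr 1
  funext e
  rw [natCast_pow_cpow]
end

section
variable {t : ℕ → ℝ}

lemma norm_x_le_of_three_le {p : ℕ} (hp : 3 ≤ p) {z : ℂ} (hz : 19/20 ≤ z.re) :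
    ‖(p:ℂ) ^ (-z)‖ ≤ 37/100 := by
  rw [norm_cpow_neg (by omega)]
  refine rpow_neg_le (by norm_num) (by omega) ?_ hz
  calc ((1:ℝ) / (37/100)) ^ (20:ℕ) ≤ (3:ℝ) ^ (19:ℕ) := by norm_num
  _ ≤ (p:ℝ) ^ (19:ℕ) := by
      gcongr
      exact_mod_cast hp

lemma norm_x_le_of_two_le {p : ℕ} (hp : 2 ≤ p) {z : ℂ} (hz : 19/20 ≤ z.re) :
    ‖(p:ℂ) ^ (-z)‖ ≤ 13/25 := by
  rw [norm_cpow_neg (by omega)]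
  refine rpow_neg_le (by norm_num) (by omega) ?_ hz
  calc ((1:ℝ) / (13/25)) ^ (20:ℕ) ≤ (2:ℝ) ^ (19:ℕ) := by norm_num
  _ ≤ (p:ℝ) ^ (19:ℕ) := by
      gcongr
      exact_mod_cast hp

lemma norm_G_sub_one_le_of_three_le (hval : ∀ n, t n = 0 ∨ t n = 1) {p : ℕ} (hp : 3 ≤ p)
    {z : ℂ} (hz : 19/20 ≤ z.re) :
    ‖G t p z - 1‖ ≤ (100/63) * (p:ℝ) ^ (-z.re) := by
  have hb : ‖(p:ℂ) ^ (-z)‖ ≤ 37/100 := norm_x_le_of_three_le hp hz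
  have hx : ‖(p:ℂ) ^ (-z)‖ < 1 := hb.trans_lt (by norm_num)
  refine (norm_G_sub_one_le hval hx).trans ?_
  rw [norm_cpow_neg (by omega)] at hb ⊢
  have h0 : (0:ℝ) ≤ (p:ℝ) ^ (-z.re) := Real.rpow_nonneg (by positivity) _
  rw [div_le_iff₀ (by linarith)]
  nlinarith

lemma G_ne_zero_of_three_le (hval : ∀ n, t n = 0 ∨ t n = 1) {p : ℕ} (hp : 3 ≤ p)
    {z : ℂ} (hz : 19/20 ≤ z.re) : G t p z ≠ 0 := by
  intro h0
  have h := norm_G_sub_one_le_of_three_le hval hp hz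
  have hb : (p:ℝ) ^ (-z.re) ≤ 37/100 := by
    have := norm_x_le_of_three_le hp hz
    rwa [norm_cpow_neg (by omega)] at this
  rw [h0] at h
  simp only [zero_sub, norm_neg, norm_one] at h
  nlinarith

lemma re_G_pos_of_three_le (hval : ∀ n, t n = 0 ∨ t n = 1) {p : ℕ} (hp : 3 ≤ p)
    {z : ℂ} (hz : 19/20 ≤ z.re) : 0 < (G t p z).re := by
  have h := norm_G_sub_one_le_of_three_le hval hp hz
  have hb : (p:ℝ) ^ (-z.re) ≤ 37/100 := by
    have := norm_x_le_of_three_le hp hz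
    rwa [norm_cpow_neg (by omega)] at this
  have h2 : |(G t p z - 1).re| ≤ ‖G t p z - 1‖ := Complex.abs_re_le_norm _
  have h3 : (G t p z - 1).re = (G t p z).re - 1 := by simp
  have h0 : (0:ℝ) ≤ (p:ℝ) ^ (-z.re) := Real.rpow_nonneg (by positivity) _
  rw [h3] at h2
  cases abs_le.mp h2 with
  | intro hl hr => nlinarith

lemma G_two_ne_zero (hone : t 1 = 1) (hval : ∀ n, t n = 0 ∨ t n = 1)
    {z : ℂ} (hz : 19/20 ≤ z.re) : G t 2 z ≠ 0 := by
  have hxn : ‖(2:ℂ) ^ (-z)‖ ≤ 13/25 := by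
    have := norm_x_le_of_two_le (le_refl 2) hz
    simpa using this
  set x : ℂ := (2:ℂ) ^ (-z) with hxdef
  have hx1 : ‖x‖ < 1 := hxn.trans_lt (by norm_num)
  have hx0 : (0:ℝ) ≤ ‖x‖ := norm_nonneg x
  have hc1 : cf t 2 1 = t 2 - 1 := by
    show t (2^1) - t (2^0) = t 2 - 1
    norm_num [hone]
  have hc2 : cf t 2 2 = t 4 - t 2 := by
    show t (2^2) - t (2^1) = t 4 - t 2
    norm_num
  rcases hval 2 with h2 | h2
  · -- t 2 = 0
    have hR3 : ‖∑' k : ℕ, (cf t 2 (k + 3) : ℂ) * x ^ (k + 3)‖ ≤ 2197/7500 := by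
      refine (tsum_tail_norm_le (abs_cf_le hval 2) hx1 3).trans ?_
      have h1 : ‖x‖^3 ≤ (13/25)^3 := by gcongr
      have h2 : (12:ℝ)/25 ≤ 1 - ‖x‖ := by linarith
      rw [div_le_iff₀ (by linarith)]
      nlinarith
    have hsplit := G_tail hval (by have h := hx1; rw [hxdef] at h; exact_mod_cast h) 3
    push_cast at hsplit
    have hsum3 : (∑ k ∈ Finset.range 3, (cf t 2 k : ℂ) * ((2:ℂ) ^ (-z)) ^ k)
        = 1 + (t 2 - 1 : ℝ) * x + (t 4 - t 2 : ℝ) * x ^ 2 := by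
      rw [Finset.sum_range_succ, Finset.sum_range_succ, Finset.sum_range_one]
      rw [show cf t 2 0 = 1 from rfl, hc1, hc2]
      push_cast
      ring
    rcases hval 4 with h4 | h4
    · -- t 4 = 0 : G = 1 - x + R3
      have hG : G t 2 z = (1 - x) + ∑' k : ℕ, (cf t 2 (k + 3) : ℂ) * x ^ (k + 3) := by
        rw [hsplit, hsum3, h2, h4]
        push_cast
        ring
      intro h0
      rw [h0] at hG
      have h1x : (12:ℝ)/25 ≤ ‖(1:ℂ) - x‖ := by
        have := norm_sub_norm_le (1:ℂ) x
        simp only [norm_one] at this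
        linarith
      have : ‖(1:ℂ) - x‖ = ‖∑' k : ℕ, (cf t 2 (k + 3) : ℂ) * x ^ (k + 3)‖ := by
        rw [show (1:ℂ) - x = -∑' k : ℕ, (cf t 2 (k + 3) : ℂ) * x ^ (k + 3) by
          linear_combination -hG]
        simp
      rw [this] at h1x
      linarith
    · -- t 4 = 1 : G = 1 - x + x^2 + R3
      have hG : G t 2 z = (1 - x + x ^ 2) + ∑' k : ℕ, (cf t 2 (k + 3) : ℂ) * x ^ (k + 3) := by
        rw [hsplit, hsum3, h2, h4]
        push_cast
        ring
      have hkey : (1 - x + x ^ 2) * (1 + x) = 1 + x ^ 3 := by ring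
      have h1px : ‖(1:ℂ) + x‖ ≤ 38/25 := by
        refine (norm_add_le _ _).trans ?_
        simp only [norm_one]
        linarith
      have h1px3 : (13428:ℝ)/15625 ≤ ‖(1:ℂ) + x ^ 3‖ := by
        have h1 := norm_sub_norm_le (1:ℂ) (-x^3)
        simp only [norm_one, norm_neg, norm_pow, sub_neg_eq_add] at h1
        have h2 : ‖x‖^3 ≤ 2197/15625 :=
          calc ‖x‖^3 ≤ (13/25:ℝ)^3 := by gcongr
          _ = 2197/15625 := by norm_num
        linarith
      have hmain : (1413:ℝ)/2500 ≤ ‖(1:ℂ) - x + x ^ 2‖ := by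
        have hn : ‖(1 - x + x ^ 2) * (1 + x)‖ = ‖(1:ℂ) + x ^ 3‖ := by rw [hkey]
        rw [norm_mul] at hn
        have h1pxpos : (0:ℝ) ≤ ‖(1:ℂ) + x‖ := norm_nonneg _
        nlinarith [norm_nonneg ((1:ℂ) - x + x ^ 2)]
      intro h0
      rw [h0] at hG
      have : ‖(1:ℂ) - x + x ^ 2‖ = ‖∑' k : ℕ, (cf t 2 (k + 3) : ℂ) * x ^ (k + 3)‖ := by
        rw [show (1:ℂ) - x + x ^ 2 = -∑' k : ℕ, (cf t 2 (k + 3) : ℂ) * x ^ (k + 3) by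
          linear_combination -hG]
        simp
      rw [this] at hmain
      linarith
  · -- t 2 = 1 : G = 1 + R2
    have hR2 : ‖∑' k : ℕ, (cf t 2 (k + 2) : ℂ) * x ^ (k + 2)‖ ≤ 169/300 := by
      refine (tsum_tail_norm_le (abs_cf_le hval 2) hx1 2).trans ?_
      have h1 : ‖x‖^2 ≤ (13/25)^2 := by gcongr
      have hden : (12:ℝ)/25 ≤ 1 - ‖x‖ := by linarith
      rw [div_le_iff₀ (by linarith)]
      nlinarith
    have hsplit := G_tail hval (by have h := hx1; rw [hxdef] at h; exact_mod_cast h) 2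
    push_cast at hsplit
    have hsum2 : (∑ k ∈ Finset.range 2, (cf t 2 k : ℂ) * ((2:ℂ) ^ (-z)) ^ k) = 1 := by
      rw [Finset.sum_range_succ, Finset.sum_range_one]
      rw [show cf t 2 0 = 1 from rfl, hc1, h2]
      push_cast
      ring
    have hG : G t 2 z = 1 + ∑' k : ℕ, (cf t 2 (k + 2) : ℂ) * x ^ (k + 2) := by
      rw [hsplit, hsum2]
    intro h0
    rw [h0] at hG
    have : ‖(1:ℂ)‖ = ‖∑' k : ℕ, (cf t 2 (k + 2) : ℂ) * x ^ (k + 2)‖ := by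
      rw [show (1:ℂ) = -∑' k : ℕ, (cf t 2 (k + 2) : ℂ) * x ^ (k + 2) by linear_combination -hG]
      simp
    simp only [norm_one] at this
    linarith
end

def V : Set ℂ := {z | 19/20 < z.re}

lemma isOpen_V : IsOpen V := isOpen_lt continuous_const Complex.continuous_re

lemma mem_V_le {z : ℂ} (hz : z ∈ V) : 19/20 ≤ z.re := le_of_lt hz

section
variable {t : ℕ → ℝ}

lemma diff_cpow {n : ℕ} (h : 0 < n) : Differentiable ℂ (fun z : ℂ => (n:ℂ) ^ (-z)) :=
  Differentiable.const_cpow (differentiable_neg) (Or.inl (by exact_mod_cast h.ne'))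

lemma diffG (hval : ∀ n, t n = 0 ∨ t n = 1) {p : ℕ} (hp : 2 ≤ p) :
    DifferentiableOn ℂ (G t p) V := by
  refine Complex.differentiableOn_tsum_of_summable_norm (u := fun k => ((13:ℝ)/25) ^ k)
    (summable_geometric_of_lt_one (by norm_num) (by norm_num)) (fun k => ?_) isOpen_V
    (fun k w hw => ?_)
  · exact ((((diff_cpow (show 0 < p by omega)).pow k).const_mul _)).differentiableOn
  · rw [norm_mul, norm_pow]
    have h1 : ‖((cf t p k : ℝ) : ℂ)‖ ≤ 1 := by simpa using abs_cf_le hval p k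
    have h2 : ‖(p:ℂ) ^ (-w)‖ ≤ 13/25 := norm_x_le_of_two_le hp (mem_V_le hw)
    calc ‖((cf t p k : ℝ) : ℂ)‖ * ‖(p:ℂ) ^ (-w)‖ ^ k ≤ 1 * ((13:ℝ)/25) ^ k := by
          gcongr <;> first | exact norm_nonneg _ | assumption
    _ = ((13:ℝ)/25) ^ k := one_mul _

noncomputable def hfun (t : ℕ → ℝ) (n : ℕ) (z : ℂ) : ℂ :=
  if n.Prime ∧ 3 ≤ n then
    Complex.log (G t n z) + (if t n = 0 then (n:ℂ) ^ (-z) else 0)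
  else 0

lemma hfun_eq_tail (hone : t 1 = 1) (hval : ∀ n, t n = 0 ∨ t n = 1) {n : ℕ}
    (hn : n.Prime ∧ 3 ≤ n) {z : ℂ} (hz : 19/20 ≤ z.re) :
    G t n z - 1 + (if t n = 0 then (n:ℂ) ^ (-z) else 0)
      = ∑' k : ℕ, (cf t n (k + 2) : ℂ) * ((n:ℂ) ^ (-z)) ^ (k + 2) := by
  have hx : ‖(n:ℂ) ^ (-z)‖ < 1 :=
    (norm_x_le_of_three_le hn.2 hz).trans_lt (by norm_num)
  have hsplit := G_tail hval hx 2
  have hc1 : cf t n 1 = t n - 1 := by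
    show t (n^1) - t (n^0) = t n - 1
    norm_num [hone]
  rw [hsplit]
  rw [Finset.sum_range_succ, Finset.sum_range_one, show cf t n 0 = 1 from rfl, hc1]
  rcases hval n with h | h
  · simp only [h, if_pos rfl]
    push_cast [h]
    ring
  · rw [if_neg (by rw [h]; norm_num)]
    push_cast [h]
    ring

lemma hfun_bound (hone : t 1 = 1) (hval : ∀ n, t n = 0 ∨ t n = 1) (n : ℕ) {z : ℂ}
    (hz : 19/20 ≤ z.re) :
    ‖hfun t n z‖ ≤ 5 * (n:ℝ) ^ (-(19/10 : ℝ)) := by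
  by_cases hn : n.Prime ∧ 3 ≤ n
  · set a : ℝ := (n:ℝ) ^ (-z.re) with ha
    have hn0 : 0 < n := by omega
    have hxa : ‖(n:ℂ) ^ (-z)‖ = a := norm_cpow_neg hn0 z
    have ha0 : 0 ≤ a := Real.rpow_nonneg (by positivity) _
    have ha37 : a ≤ 37/100 := by
      have := norm_x_le_of_three_le hn.2 hz
      rwa [hxa] at this
    have hx1 : ‖(n:ℂ) ^ (-z)‖ < 1 := by rw [hxa]; linarith
    set w : ℂ := G t n z - 1 with hw
    have hwb : ‖w‖ ≤ (100/63) * a := norm_G_sub_one_le_of_three_le hval hn.2 hz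
    have hw1 : ‖w‖ < 1 := by linarith
    have hlog := Complex.norm_log_one_add_sub_self_le hw1
    have hone_add : (1 : ℂ) + w = G t n z := by rw [hw]; ring
    have htail : ‖w + (if t n = 0 then (n:ℂ) ^ (-z) else 0)‖ ≤ a ^ 2 / (1 - a) := by
      rw [hw, hfun_eq_tail hone hval hn hz]
      have := tsum_tail_norm_le (abs_cf_le hval n) hx1 2
      rwa [hxa] at this
    have hfeq : hfun t n z = (Complex.log (1 + w) - w)
        + (w + (if t n = 0 then (n:ℂ) ^ (-z) else 0)) := by
      rw [hfun, if_pos hn, hone_add]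
      ring
    rw [hfeq]
    have h1 : ‖Complex.log (1 + w) - w‖ ≤ (31/10) * a ^ 2 := by
      refine hlog.trans ?_
      have hnn : 0 ≤ ‖w‖ := norm_nonneg w
      have hinv : (1 - ‖w‖)⁻¹ ≤ 63/26 := by
        rw [inv_le_comm₀ (by linarith) (by norm_num)]
        linarith
      have hw2 : ‖w‖ ^ 2 ≤ ((100/63) * a) ^ 2 := by gcongr
      have hmm : ‖w‖ ^ 2 * (1 - ‖w‖)⁻¹ ≤ ((100/63) * a) ^ 2 * (63/26) :=
        mul_le_mul hw2 hinv (by have h0 : (0:ℝ) < 1 - ‖w‖ := by linarith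
                                positivity) (by positivity)
      nlinarith
    have h2 : a ^ 2 / (1 - a) ≤ (100/63) * a ^ 2 := by
      rw [div_le_iff₀ (by linarith)]
      nlinarith
    have h3 : a ^ 2 ≤ (n:ℝ) ^ (-(19/10 : ℝ)) := by
      have hn1 : (1:ℝ) ≤ (n:ℝ) := by exact_mod_cast hn0
      have ha' : a ≤ (n:ℝ) ^ (-(19/20 : ℝ)) :=
        Real.rpow_le_rpow_of_exponent_le hn1 (by linarith)
      have hb0 : (0:ℝ) ≤ (n:ℝ) ^ (-(19/20 : ℝ)) := Real.rpow_nonneg (by positivity) _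
      have := pow_le_pow_left₀ ha0 ha' 2
      refine this.trans ?_
      rw [← Real.rpow_natCast ((n:ℝ) ^ (-(19/20 : ℝ))) 2, ← Real.rpow_mul (by positivity)]
      norm_num
    calc ‖(Complex.log (1 + w) - w) + (w + (if t n = 0 then (n:ℂ) ^ (-z) else 0))‖
        ≤ ‖Complex.log (1 + w) - w‖ + ‖w + (if t n = 0 then (n:ℂ) ^ (-z) else 0)‖ :=
          norm_add_le _ _
    _ ≤ (31/10) * a ^ 2 + (100/63) * a ^ 2 := by linarith [htail.trans h2]
    _ ≤ 5 * a ^ 2 := by nlinarith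
    _ ≤ 5 * (n:ℝ) ^ (-(19/10 : ℝ)) := by linarith
  · rw [hfun, if_neg hn]
    simp only [norm_zero]
    positivity

lemma summable_hbound : Summable (fun n : ℕ => 5 * (n:ℝ) ^ (-(19/10 : ℝ))) :=
  (Real.summable_nat_rpow.mpr (by norm_num)).mul_left 5

lemma diff_hfun (hone : t 1 = 1) (hval : ∀ n, t n = 0 ∨ t n = 1) (n : ℕ) :
    DifferentiableOn ℂ (hfun t n) V := by
  by_cases hn : n.Prime ∧ 3 ≤ n
  · have hG : DifferentiableOn ℂ (G t n) V := diffG hval (by omega)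
    have h1 : DifferentiableOn ℂ (fun z => Complex.log (G t n z)) V := by
      intro z hz
      have hGat : DifferentiableAt ℂ (G t n) z :=
        hG.differentiableAt (isOpen_V.mem_nhds hz)
      have hmem : G t n z ∈ Complex.slitPlane :=
        Complex.mem_slitPlane_iff.mpr (Or.inl (re_G_pos_of_three_le hval hn.2 (mem_V_le hz)))
      exact ((Complex.differentiableAt_log hmem).comp z hGat).differentiableWithinAt
    have h2 : DifferentiableOn ℂ (fun z => (if t n = 0 then (n:ℂ) ^ (-z) else 0)) V := by
      by_cases ht : t n = 0
      · simp only [ht, if_pos rfl]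
        exact (diff_cpow (show 0 < n by omega)).differentiableOn
      · simp only [if_neg ht]
        exact differentiableOn_const 0
    have : hfun t n = fun z => Complex.log (G t n z) + (if t n = 0 then (n:ℂ) ^ (-z) else 0) := by
      funext z
      rw [hfun, if_pos hn]
    rw [this]
    exact h1.add h2
  · have : hfun t n = fun _ => 0 := by
      funext z
      rw [hfun, if_neg hn]
    rw [this]
    exact differentiableOn_const 0

noncomputable def Hf (t : ℕ → ℝ) (z : ℂ) : ℂ := ∑' n : ℕ, hfun t n z

noncomputable def Afun (t : ℕ → ℝ) (g : ℂ → ℂ) (z : ℂ) : ℂ :=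
  G t 2 z * Complex.exp (-(g z) + (if t 2 = 0 then (2:ℂ) ^ (-z) else 0) + Hf t z)

lemma diff_Hf (hone : t 1 = 1) (hval : ∀ n, t n = 0 ∨ t n = 1) :
    DifferentiableOn ℂ (Hf t) V := by
  refine Complex.differentiableOn_tsum_of_summable_norm summable_hbound
    (fun n => diff_hfun hone hval n) isOpen_V (fun n w hw => ?_)
  exact hfun_bound hone hval n (mem_V_le hw)

end


section
variable {t : ℕ → ℝ}

lemma natCast_mul_cpow (m n : ℕ) (w : ℂ) :
    ((m * n : ℕ) : ℂ) ^ w = (m:ℂ) ^ w * (n:ℂ) ^ w := by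
  have h := Complex.mul_cpow_ofReal_nonneg (Nat.cast_nonneg m) (Nat.cast_nonneg n) w
  push_cast at h ⊢
  exact h

lemma summable_norm_fz (hval : ∀ n, t n = 0 ∨ t n = 1) {z : ℂ} (hz : 1 < z.re) :
    Summable (fun n : ℕ => ‖(t n : ℂ) * (n:ℂ) ^ (-z)‖) := by
  have hzne : -z ≠ 0 := by
    intro h
    rw [neg_eq_zero] at h
    rw [h] at hz
    norm_num at hz
  refine Summable.of_nonneg_of_le (fun n => norm_nonneg _) (fun n => ?_)
    (Real.summable_nat_rpow.mpr (by linarith : -z.re < -1))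
  rcases Nat.eq_zero_or_pos n with h | h
  · subst h
    simp [Complex.zero_cpow hzne, Real.zero_rpow (by linarith : -z.re ≠ 0)]
  · rw [norm_mul, norm_cpow_neg h]
    calc ‖((t n : ℝ) : ℂ)‖ * (n:ℝ) ^ (-z.re) ≤ 1 * (n:ℝ) ^ (-z.re) := by
          gcongr
          · simpa using abs_t_le hval n
    _ = (n:ℝ) ^ (-z.re) := one_mul _

lemma euler_T (hone : t 1 = 1) (hmul : ∀ m n : ℕ, Nat.Coprime m n → t (m * n) = t m * t n)
    (hval : ∀ n, t n = 0 ∨ t n = 1) {z : ℂ} (hz : 1 < z.re) :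
    HasProd (fun p : Nat.Primes => F t (p:ℕ) z)
      (∑' n : ℕ, (t n : ℂ) * (n:ℂ) ^ (-z)) := by
  have hzne : -z ≠ 0 := by
    intro h; rw [neg_eq_zero] at h; rw [h] at hz; norm_num at hz
  have h := EulerProduct.eulerProduct_hasProd
    (f := fun n : ℕ => (t n : ℂ) * (n:ℂ) ^ (-z))
    (by simp [hone]) (fun {m n} hc => by
      rw [hmul m n hc, natCast_mul_cpow]
      push_cast
      ring)
    (summable_norm_fz hval hz) (by simp [Complex.zero_cpow hzne])
  have hfun : (fun p : Nat.Primes => ∑' e : ℕ, (t ((p:ℕ) ^ e) : ℂ) * (((p:ℕ) ^ e : ℕ):ℂ) ^ (-z))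
      = fun p : Nat.Primes => F t (p:ℕ) z := by
    funext p
    exact F_eq_euler (p:ℕ) z
  rwa [hfun] at h

lemma hasSum_sfun_g {g : ℂ → ℂ} {z : ℂ}
    (hz : 1 < z.re)
    (hid : (∑' p : {p : ℕ | p.Prime ∧ t p = 0}, ((p : ℕ) : ℂ) ^ (-z))
      = ((0:ℝ):ℂ) * Complex.log (1 / (z - 1)) + g z) :
    HasSum (fun p : Nat.Primes => if t (p:ℕ) = 0 then ((p:ℕ):ℂ) ^ (-z) else 0) (g z) := by
  have hzne : -z ≠ 0 := by
    intro h; rw [neg_eq_zero] at h; rw [h] at hz; norm_num at hz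
  have hsum : Summable (fun n : ℕ => (n:ℂ) ^ (-z)) := by
    refine Summable.of_norm ?_
    have h1 : ∀ n : ℕ, ‖((1:ℝ) : ℂ) * (n:ℂ) ^ (-z)‖ = ‖(n:ℂ) ^ (-z)‖ := by
      intro n; simp
    have := summable_norm_fz (t := fun _ => (1:ℝ)) (fun n => Or.inr rfl) hz
    simpa using this
  have hsumS : Summable (fun p : {p : ℕ | p.Prime ∧ t p = 0} => ((p:ℕ):ℂ) ^ (-z)) :=
    hsum.subtype _
  have hgS : HasSum (fun p : {p : ℕ | p.Prime ∧ t p = 0} => ((p:ℕ):ℂ) ^ (-z)) (g z) := by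
    have h0 : (∑' p : {p : ℕ | p.Prime ∧ t p = 0}, ((p : ℕ) : ℂ) ^ (-z)) = g z := by
      rw [hid]; simp
    rw [← h0]
    exact hsumS.hasSum
  have hinj : Function.Injective
      (fun p : {p : ℕ | p.Prime ∧ t p = 0} => (⟨(p:ℕ), p.2.1⟩ : Nat.Primes)) := by
    intro a b hab
    apply Subtype.ext
    simpa [Subtype.ext_iff] using hab
  have hvan : ∀ q : Nat.Primes,
      q ∉ Set.range (fun p : {p : ℕ | p.Prime ∧ t p = 0} => (⟨(p:ℕ), p.2.1⟩ : Nat.Primes)) →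
      (if t (q:ℕ) = 0 then ((q:ℕ):ℂ) ^ (-z) else 0) = 0 := by
    intro q hq
    rw [if_neg]
    intro ht0
    refine hq ⟨⟨(q:ℕ), ⟨q.2, ht0⟩⟩, ?_⟩
    apply Subtype.ext
    rfl
  refine (Function.Injective.hasSum_iff hinj hvan).mp ?_
  convert hgS with p
  simp only [Function.comp]
  rw [if_pos p.2.2]

lemma key_prod (hone : t 1 = 1) (hval : ∀ n, t n = 0 ∨ t n = 1) {g : ℂ → ℂ} {z : ℂ}
    (hz1 : 1 < z.re)
    (hgs : HasSum (fun p : Nat.Primes => if t (p:ℕ) = 0 then ((p:ℕ):ℂ) ^ (-z) else 0) (g z)) :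
    HasProd (fun p : Nat.Primes => G t (p:ℕ) z) (Afun t g z) := by
  have hz : 19/20 ≤ z.re := by linarith
  have hHsum : HasSum (fun n : ℕ => hfun t n z) (Hf t z) :=
    (Summable.of_norm_bounded summable_hbound (fun n => hfun_bound hone hval n hz)).hasSum
  have hm : HasSum (fun p : Nat.Primes => hfun t (p:ℕ) z) (Hf t z) := by
    refine (Function.Injective.hasSum_iff Subtype.coe_injective (fun n hn => ?_)).mpr hHsum
    rw [hfun, if_neg]
    intro hcon
    exact hn ⟨⟨n, hcon.1⟩, rfl⟩
  set p2 : Nat.Primes := ⟨2, Nat.prime_two⟩ with hp2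
  set s2 : ℂ := (if t 2 = 0 then (2:ℂ) ^ (-z) else 0) with hs2
  set l2 : ℂ := Complex.log (G t 2 z) + s2 with hl2
  have hsingle : HasSum (fun p : Nat.Primes => if p = p2 then l2 else 0) l2 :=
    hasSum_ite_eq p2 l2
  have hL : HasSum (fun p : Nat.Primes =>
      Complex.log (G t (p:ℕ) z) + (if t (p:ℕ) = 0 then ((p:ℕ):ℂ) ^ (-z) else 0))
      (Hf t z + l2) := by
    have hadd := hm.add hsingle
    have heq : (fun p : Nat.Primes => hfun t (p:ℕ) z + (if p = p2 then l2 else 0))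
        = fun p : Nat.Primes =>
          Complex.log (G t (p:ℕ) z) + (if t (p:ℕ) = 0 then ((p:ℕ):ℂ) ^ (-z) else 0) := by
      funext p
      by_cases hp : p = p2
      · subst hp
        rw [if_pos rfl, hfun, if_neg (by norm_num), hl2, hs2]
        show 0 + (Complex.log (G t 2 z) + if t 2 = 0 then (2:ℂ) ^ (-z) else 0)
          = Complex.log (G t 2 z) + if t 2 = 0 then ((2:ℕ):ℂ) ^ (-z) else 0
        norm_num
      · have hne2 : (p:ℕ) ≠ 2 := fun h => hp (Subtype.ext h)
        have h2 := p.2.two_le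
        have hp3 : 3 ≤ (p:ℕ) := by omega
        rw [if_neg hp, hfun, if_pos ⟨p.2, hp3⟩]
        ring
    rwa [heq] at hadd
  have hlogsum : HasSum (fun p : Nat.Primes => Complex.log (G t (p:ℕ) z))
      (Hf t z + l2 - g z) := by
    have hsub := hL.sub hgs
    have heq : (fun p : Nat.Primes =>
        (Complex.log (G t (p:ℕ) z) + (if t (p:ℕ) = 0 then ((p:ℕ):ℂ) ^ (-z) else 0))
          - (if t (p:ℕ) = 0 then ((p:ℕ):ℂ) ^ (-z) else 0))
        = fun p : Nat.Primes => Complex.log (G t (p:ℕ) z) := by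
      funext p; ring
    rwa [heq] at hsub
  have hexp := hlogsum.cexp
  have hGne : ∀ p : Nat.Primes, G t (p:ℕ) z ≠ 0 := by
    intro p
    rcases Nat.lt_or_ge (p:ℕ) 3 with h | h
    · have h2 : (p:ℕ) = 2 := by have := p.2.two_le; omega
      rw [h2]
      exact G_two_ne_zero hone hval hz
    · exact G_ne_zero_of_three_le hval h hz
  have heq2 : (Complex.exp ∘ fun p : Nat.Primes => Complex.log (G t (p:ℕ) z))
      = fun p : Nat.Primes => G t (p:ℕ) z := by
    funext p
    exact Complex.exp_log (hGne p)
  rw [heq2] at hexp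
  have hval2 : Complex.exp (Hf t z + l2 - g z) = Afun t g z := by
    rw [hl2, show Hf t z + (Complex.log (G t 2 z) + s2) - g z
      = Complex.log (G t 2 z) + (-(g z) + s2 + Hf t z) by ring, Complex.exp_add,
      Complex.exp_log (G_two_ne_zero hone hval hz)]
    rfl
  rwa [hval2] at hexp

lemma zeta_mul_A (hone : t 1 = 1) (hmul : ∀ m n : ℕ, Nat.Coprime m n → t (m * n) = t m * t n)
    (hval : ∀ n, t n = 0 ∨ t n = 1) {g : ℂ → ℂ} {z : ℂ} (hz1 : 1 < z.re)
    (hgs : HasSum (fun p : Nat.Primes => if t (p:ℕ) = 0 then ((p:ℕ):ℂ) ^ (-z) else 0) (g z)) :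
    riemannZeta z * Afun t g z = ∑' n : ℕ, (t n : ℂ) * (n:ℂ) ^ (-z) := by
  have hζ := riemannZeta_eulerProduct_hasProd hz1
  have hA := key_prod hone hval hz1 hgs
  have hmulprod := hζ.mul hA
  have heq : (fun p : Nat.Primes => (1 - ((p:ℕ):ℂ) ^ (-z))⁻¹ * G t (p:ℕ) z)
      = fun p : Nat.Primes => F t (p:ℕ) z := by
    funext p
    have hx : ‖((p:ℕ):ℂ) ^ (-z)‖ < 1 := x_norm_lt_one p.2.two_le (by linarith)
    have hne : (1 : ℂ) - ((p:ℕ):ℂ) ^ (-z) ≠ 0 := by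
      intro h
      have : ((p:ℕ):ℂ) ^ (-z) = 1 := by linear_combination -h
      rw [this] at hx
      simp at hx
    rw [G_eq_F hone hval hx]
    field_simp
  rw [heq] at hmulprod
  exact (hmulprod.unique (euler_T hone hmul hval hz1))
end
end DDAux

open DDAux in
/-- Intermediate claim in the proof of Corollary 5.2: let `t : ℕ → ℝ` be multiplicative
with values in `{0, 1}` such that `{p : t(p) = 0}` is a regular set of primes of
Dirichlet density `0`, and let `T(z) = ∑ t(n) n^{-z}` for `Re z > 1`. Then
`A(z) = T(z)/ζ(z)` extends to a holomorphic function on an open neighbourhood of the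
closed half-plane `Re z ≥ 1`, its value at `z = 1` is a positive real number, and
`{n : t(n) = 1}` has Dedekind–Dirichlet density `A(1)`. -/
theorem nonvanishing_set_dedekindDirichlet_density (t : ℕ → ℝ)
    (hone : t 1 = 1)
    (hmul : ∀ m n : ℕ, Nat.Coprime m n → t (m * n) = t m * t n)
    (hval : ∀ n : ℕ, t n = 0 ∨ t n = 1)
    (hzero : IsRegularPrimeSet {p : ℕ | p.Prime ∧ t p = 0} 0) :
    ∃ (U : Set ℂ) (A : ℂ → ℂ), IsOpen U ∧ {z : ℂ | 1 ≤ z.re} ⊆ U ∧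
      DifferentiableOn ℂ A U ∧
      (∀ z : ℂ, 1 < z.re →
        A z = (∑' n : ℕ, (t n : ℂ) * (n : ℂ) ^ (-z)) / riemannZeta z) ∧
      (A 1).im = 0 ∧ 0 < (A 1).re ∧
      HasDedekindDirichletDensity {n : ℕ | t n = 1} (A 1).re := by
  obtain ⟨-, Ug, g, hUopen, hUsub, hgdiff, hgid⟩ := hzero
  set A : ℂ → ℂ := Afun t g with hA
  set U : Set ℂ := Ug ∩ V with hU
  have hUopen' : IsOpen U := hUopen.inter isOpen_V
  have hUsub' : {z : ℂ | 1 ≤ z.re} ⊆ U := fun z hz =>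
    ⟨hUsub hz, by
      have : (1:ℝ) ≤ z.re := hz
      show 19/20 < z.re
      linarith⟩
  -- HasSum for g
  have hgs : ∀ z : ℂ, 1 < z.re →
      HasSum (fun p : Nat.Primes => if t (p:ℕ) = 0 then ((p:ℕ):ℂ) ^ (-z) else 0) (g z) :=
    fun z hz => hasSum_sfun_g hz (by exact_mod_cast hgid z hz)
  -- A = T / zeta on re > 1
  have hAeq : ∀ z : ℂ, 1 < z.re →
      A z = (∑' n : ℕ, (t n : ℂ) * (n : ℂ) ^ (-z)) / riemannZeta z := by
    intro z hz
    have hζne : riemannZeta z ≠ 0 := riemannZeta_ne_zero_of_one_le_re (le_of_lt hz)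
    rw [eq_div_iff hζne, mul_comm]
    exact zeta_mul_A hone hmul hval hz (hgs z hz)
  -- differentiability
  have hdiffA : DifferentiableOn ℂ A U := by
    have h1 : DifferentiableOn ℂ (G t 2) U := (diffG hval (le_refl 2)).mono inter_subset_right
    have h2 : DifferentiableOn ℂ (fun z => -(g z)
        + (if t 2 = 0 then (2:ℂ) ^ (-z) else 0) + Hf t z) U := by
      refine DifferentiableOn.add (DifferentiableOn.add ?_ ?_) ?_
      · exact (hgdiff.mono inter_subset_left).neg
      · by_cases ht : t 2 = 0
        · simp only [ht, if_pos rfl]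
          exact ((diff_cpow (n := 2) (by norm_num)).differentiableOn).congr
            (fun z _ => by norm_num)
        · simp only [if_neg ht]
          exact differentiableOn_const 0
      · exact (diff_Hf hone hval).mono inter_subset_right
    exact h1.mul h2.cexp
  have h1U : (1:ℂ) ∈ U := hUsub' (by simp)
  have hcontA : ContinuousAt A 1 :=
    (hdiffA.differentiableAt (hUopen'.mem_nhds h1U)).continuousAt
  have hA1ne : A 1 ≠ 0 := by
    rw [hA]
    exact mul_ne_zero (G_two_ne_zero hone hval (by norm_num)) (Complex.exp_ne_zero _)
  -- real-valued representation on the real axis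
  have hTr : ∀ x : ℝ, 1 < x →
      ((∑' n : ℕ, t n * (n:ℝ) ^ (-x) : ℝ) : ℂ) = ∑' n : ℕ, (t n : ℂ) * (n:ℂ) ^ (-(x:ℂ)) := by
    intro x hx
    rw [Complex.ofReal_tsum]
    congr 1
    funext n
    rw [Complex.ofReal_mul]
    congr 1
    rw [Complex.ofReal_cpow (Nat.cast_nonneg n) (-x)]
    push_cast
    ring_nf
  have hZr : ∀ x : ℝ, 1 < x →
      riemannZeta (x:ℂ) = ((∑' n : ℕ, (n:ℝ) ^ (-x) : ℝ) : ℂ) := by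
    intro x hx
    rw [zeta_eq_tsum_one_div_nat_cpow (by simpa using hx)]
    rw [Complex.ofReal_tsum]
    congr 1
    funext n
    rw [Complex.ofReal_cpow (Nat.cast_nonneg n) (-x)]
    rw [one_div, ← Complex.cpow_neg]
    push_cast
    ring_nf
  have hAreal : ∀ x : ℝ, 1 < x → A (x:ℂ)
      = (((∑' n : ℕ, t n * (n:ℝ) ^ (-x)) / (∑' n : ℕ, (n:ℝ) ^ (-x)) : ℝ) : ℂ) := by
    intro x hx
    have h1 : (1:ℝ) < ((x:ℂ)).re := by simpa using hx
    rw [hAeq (x:ℂ) h1, ← hTr x hx, hZr x hx, Complex.ofReal_div]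
  -- tendsto facts
  have hofReal : Tendsto (fun x : ℝ => (x:ℂ)) (nhdsWithin 1 (Set.Ioi 1)) (nhds (1:ℂ)) := by
    have h2 : Tendsto (fun x : ℝ => (x:ℂ)) (nhdsWithin (1:ℝ) (Set.Ioi 1)) (nhds ((1:ℝ):ℂ)) :=
      (Complex.continuous_ofReal.tendsto 1).mono_left
        (nhdsWithin_le_nhds (s := Set.Ioi (1:ℝ)))
    simpa using h2
  have hofReal' : Tendsto (fun x : ℝ => (x:ℂ)) (nhdsWithin 1 (Set.Ioi 1))
      (nhdsWithin 1 {(1:ℂ)}ᶜ) := by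
    rw [tendsto_nhdsWithin_iff]
    refine ⟨hofReal, ?_⟩
    filter_upwards [eventually_mem_nhdsWithin] with x hx
    simp only [mem_compl_iff, mem_singleton_iff]
    intro h
    have : x = 1 := by exact_mod_cast h
    rw [this] at hx
    exact lt_irrefl _ (mem_Ioi.mp hx)
  have hAx : Tendsto (fun x : ℝ => A (x:ℂ)) (nhdsWithin 1 (Set.Ioi 1)) (nhds (A 1)) :=
    hcontA.tendsto.comp hofReal
  -- imaginary part zero
  have hAim : (A 1).im = 0 := by
    have h4 : Tendsto (fun x : ℝ => (A (x:ℂ)).im) (nhdsWithin 1 (Set.Ioi 1))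
        (nhds ((A 1).im)) := (Complex.continuous_im.tendsto _).comp hAx
    have h5 : (fun x : ℝ => (A (x:ℂ)).im) =ᶠ[nhdsWithin 1 (Set.Ioi 1)] (fun _ => 0) := by
      filter_upwards [eventually_mem_nhdsWithin] with x hx
      rw [hAreal x hx]
      exact Complex.ofReal_im _
    exact tendsto_nhds_unique (h4.congr' h5) tendsto_const_nhds
  -- real part nonneg
  have hAre : 0 ≤ (A 1).re := by
    have h4 : Tendsto (fun x : ℝ => (A (x:ℂ)).re) (nhdsWithin 1 (Set.Ioi 1))
        (nhds ((A 1).re)) := (Complex.continuous_re.tendsto _).comp hAx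
    refine ge_of_tendsto h4 ?_
    filter_upwards [eventually_mem_nhdsWithin] with x hx
    rw [hAreal x hx, Complex.ofReal_re]
    refine div_nonneg (tsum_nonneg fun n => ?_) (tsum_nonneg fun n => ?_)
    · refine mul_nonneg ?_ (Real.rpow_nonneg (Nat.cast_nonneg n) _)
      rcases hval n with h | h <;> rw [h] <;> norm_num
    · exact Real.rpow_nonneg (Nat.cast_nonneg n) _
  have hArepos : 0 < (A 1).re := by
    rcases hAre.lt_or_eq with h | h
    · exact h
    · exfalso
      apply hA1ne
      apply Complex.ext
      · simpa using h.symm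
      · simpa using hAim
  -- density
  have hdens : HasDedekindDirichletDensity {n : ℕ | t n = 1} (A 1).re := by
    have hΦ : Tendsto (fun x : ℝ => (((x:ℂ) - 1) * riemannZeta (x:ℂ)) * A (x:ℂ))
        (nhdsWithin 1 (Set.Ioi 1)) (nhds (1 * A 1)) := by
      refine Tendsto.mul ?_ hAx
      exact riemannZeta_residue_one.comp hofReal'
    have hΦre : Tendsto (fun x : ℝ => ((((x:ℂ) - 1) * riemannZeta (x:ℂ)) * A (x:ℂ)).re)
        (nhdsWithin 1 (Set.Ioi 1)) (nhds ((A 1).re)) := by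
      have h := (Complex.continuous_re.tendsto _).comp hΦ
      simpa only [one_mul, Function.comp_def] using h
    have hsubty : ∀ x : ℝ, (∑' n : {n : ℕ | t n = 1}, ((n:ℕ):ℝ) ^ (-x))
        = ∑' n : ℕ, t n * (n:ℝ) ^ (-x) := by
      intro x
      rw [tsum_subtype {n : ℕ | t n = 1} (fun n => (n:ℝ) ^ (-x))]
      congr 1
      funext n
      rcases hval n with h | h
      · rw [Set.indicator_of_notMem (by simp [h]), h, zero_mul]
      · rw [Set.indicator_of_mem (by simp [h] : n ∈ {n : ℕ | t n = 1}), h, one_mul]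
    have hEq : (fun x : ℝ => ((((x:ℂ) - 1) * riemannZeta (x:ℂ)) * A (x:ℂ)).re)
        =ᶠ[nhdsWithin 1 (Set.Ioi 1)]
        (fun x : ℝ => (x - 1) * ∑' n : {n : ℕ | t n = 1}, ((n:ℕ):ℝ) ^ (-x)) := by
      filter_upwards [eventually_mem_nhdsWithin] with x hx
      have hx1 : (1:ℝ) < x := hx
      have hre : (1:ℝ) < ((x:ℂ)).re := by simpa using hx1
      have h1 : ((x:ℂ) - 1) * riemannZeta (x:ℂ) * A (x:ℂ)
          = (((x - 1) * ∑' n : ℕ, t n * (n:ℝ) ^ (-x) : ℝ) : ℂ) := by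
        rw [mul_assoc, zeta_mul_A hone hmul hval hre (hgs _ hre), ← hTr x hx1]
        push_cast
        ring
      rw [h1, Complex.ofReal_re, hsubty x]
    exact Tendsto.congr' hEq hΦre
  exact ⟨U, A, hUopen', hUsub', hdiffA, hAeq, hAim, hArepos, hdens⟩
end

section
/- Let α > 0, C > 0 and let g : [2, ∞) → ℝ be a function satisfying |g(x)| ≤ C·x^{1−α}/(log x − 4) for all x > 55. Then the function f(z) := z·∫_{2}^{∞} g(x)·x^{−z−1} dx is well-defined and holomorphic on the open half-plane {z ∈ ℂ : Re z > 1 − α/2}; in particular it is holomorphic on an open neighborhood of the closed half-plane {z ∈ ℂ : Re z ≥ 1}. -/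
open Filter Set

/-- Analytic step in the proof of Proposition 2.2: let `α, C > 0` and let
`g : [2,∞) → ℝ` be a (measurable, locally bounded) function satisfying
`|g(x)| ≤ C x^{1-α} / (log x - 4)` for all `x > 55`. Then
`f(z) = z ∫_2^∞ g(x) x^{-z-1} dx` is well defined and holomorphic on the open
half-plane `Re z > 1 - α/2`, which is an open neighbourhood of the closed half-plane
`Re z ≥ 1`. -/
theorem integral_transform_holomorphic (α C : ℝ) (hα : 0 < α) (hC : 0 < C)
    (g : ℝ → ℝ) (hmeas : Measurable g)
    (hloc : ∃ C' : ℝ, ∀ x ∈ Set.Icc (2 : ℝ) 55, |g x| ≤ C')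
    (hg : ∀ x : ℝ, 55 < x → |g x| ≤ C * x ^ (1 - α) / (Real.log x - 4)) :
    (∀ z : ℂ, 1 - α / 2 < z.re →
      MeasureTheory.IntegrableOn
        (fun x : ℝ => (g x : ℂ) * (x : ℂ) ^ (-z - 1)) (Set.Ioi (2 : ℝ))) ∧
    DifferentiableOn ℂ
      (fun z : ℂ => z * ∫ x in Set.Ioi (2 : ℝ), (g x : ℂ) * (x : ℂ) ^ (-z - 1))
      {z : ℂ | 1 - α / 2 < z.re} ∧
    IsOpen {z : ℂ | 1 - α / 2 < z.re} ∧
    {z : ℂ | 1 ≤ z.re} ⊆ {z : ℂ | 1 - α / 2 < z.re} := by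
  classical
  obtain ⟨C', hC'⟩ := hloc
  have hC'0 : 0 ≤ C' := (abs_nonneg _).trans (hC' 2 (by constructor <;> norm_num))
  -- the extension of `g` by zero, as a complex-valued function on `(0, ∞)`
  set F : ℝ → ℂ := fun x => if 2 < x then (g x : ℂ) else 0 with hFdef
  have hFmeas : Measurable F :=
    Measurable.ite measurableSet_Ioi (Complex.measurable_ofReal.comp hmeas) measurable_const
  have hFnorm : ∀ x : ℝ, 2 < x → ‖F x‖ = |g x| := by
    intro x hx
    simp [hFdef, hx]
  -- numeric facts
  have hexp4 : Real.exp 4 < 55 := by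
    have h := Real.exp_one_lt_d9
    calc Real.exp 4 = Real.exp 1 ^ (4 : ℕ) := by
          rw [← Real.exp_nat_mul]; norm_num
      _ < 2.7182818286 ^ (4 : ℕ) := by
          exact pow_lt_pow_left₀ h (Real.exp_pos 1).le (by norm_num)
      _ < 55 := by norm_num
  have hexp5 : Real.exp 5 < 149 := by
    have h := Real.exp_one_lt_d9
    calc Real.exp 5 = Real.exp 1 ^ (5 : ℕ) := by
          rw [← Real.exp_nat_mul]; norm_num
      _ < 2.7182818286 ^ (5 : ℕ) := by
          exact pow_lt_pow_left₀ h (Real.exp_pos 1).le (by norm_num)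
      _ < 149 := by norm_num
  have hlog55 : (4 : ℝ) < Real.log 55 :=
    (Real.lt_log_iff_exp_lt (by norm_num)).2 hexp4
  -- `F` is locally integrable on `(0, ∞)`
  have hFloc : MeasureTheory.LocallyIntegrableOn F (Set.Ioi 0) := by
    rw [MeasureTheory.locallyIntegrableOn_iff isOpen_Ioi.isLocallyClosed]
    intro k hk hkc
    obtain ⟨M, hM⟩ := hkc.bddAbove
    refine MeasureTheory.Measure.integrableOn_of_bounded hkc.measure_lt_top.ne
      hFmeas.aestronglyMeasurable
      (M := max C' (C * (max M 55 * (55 : ℝ) ^ (-α)) / (Real.log 55 - 4))) ?_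
    filter_upwards [MeasureTheory.ae_restrict_mem hkc.measurableSet] with x hx
    by_cases h2 : 2 < x
    · rw [hFnorm x h2]
      by_cases h55 : x ≤ 55
      · exact le_max_of_le_left (hC' x ⟨h2.le, h55⟩)
      · push_neg at h55
        have hx0 : (0 : ℝ) < x := by linarith
        have hxM : x ≤ max M 55 := le_max_of_le_left (hM hx)
        have hxa : x ^ (1 - α) ≤ max M 55 * (55 : ℝ) ^ (-α) := by
          have h1 : x ^ (1 - α) = x * x ^ (-α) := by
            rw [show (1 : ℝ) - α = 1 + (-α) by ring, Real.rpow_add hx0, Real.rpow_one]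
          rw [h1]
          have h2' : x ^ (-α) ≤ (55 : ℝ) ^ (-α) :=
            Real.rpow_le_rpow_of_nonpos (by norm_num) h55.le (by linarith)
          have h3 : (0 : ℝ) ≤ x ^ (-α) := Real.rpow_nonneg hx0.le _
          nlinarith [Real.rpow_nonneg (show (0:ℝ) ≤ 55 by norm_num) (-α)]
        refine le_max_of_le_right ?_
        have hlogx : Real.log 55 ≤ Real.log x := Real.log_le_log (by norm_num) h55.le
        calc |g x| ≤ C * x ^ (1 - α) / (Real.log x - 4) := hg x h55
          _ ≤ C * (max M 55 * (55 : ℝ) ^ (-α)) / (Real.log 55 - 4) := by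
              gcongr
              all_goals first
                | exact hxa
                | linarith
                | positivity
    · have : F x = 0 := if_neg h2
      rw [this, norm_zero]
      exact le_max_of_le_left hC'0
  -- big-O bound at infinity
  have hF_top : F =O[atTop] (fun x : ℝ => x ^ (-(α - 1))) := by
    rw [Asymptotics.isBigO_iff]
    refine ⟨C, ?_⟩
    filter_upwards [Filter.eventually_ge_atTop (149 : ℝ)] with x hx
    have hx0 : (0 : ℝ) < x := by linarith
    have h2 : (2 : ℝ) < x := by linarith
    have h55 : (55 : ℝ) < x := by linarith
    have hlogx : (5 : ℝ) ≤ Real.log x := by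
      rw [Real.le_log_iff_exp_le hx0]
      exact hexp5.le.trans hx
    rw [hFnorm x h2, neg_sub, Real.norm_eq_abs,
      abs_of_nonneg (Real.rpow_nonneg hx0.le _)]
    calc |g x| ≤ C * x ^ (1 - α) / (Real.log x - 4) := hg x h55
      _ ≤ C * x ^ (1 - α) := div_le_self (by positivity) (by linarith)
  -- big-O bound at zero (trivial, as `F` vanishes near zero)
  have hF_bot : ∀ b : ℝ, F =O[nhdsWithin 0 (Set.Ioi 0)] (fun x : ℝ => x ^ (-b)) := by
    intro b
    rw [Asymptotics.isBigO_iff]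
    refine ⟨0, ?_⟩
    filter_upwards [Ioo_mem_nhdsGT_of_mem
      (show (0:ℝ) ∈ Set.Ico (0:ℝ) 2 by constructor <;> norm_num)] with x hx
    have : F x = 0 := if_neg (not_lt.2 hx.2.le)
    simp [this]
  -- the integral on `(2, ∞)` is the Mellin transform of `F` at `-z`
  have hEq : ∀ z : ℂ,
      mellin F (-z) = ∫ x in Set.Ioi (2 : ℝ), (g x : ℂ) * (x : ℂ) ^ (-z - 1) := by
    intro z
    have hfun : (fun x : ℝ => (x : ℂ) ^ (-z - 1) • F x)
        = Set.indicator (Set.Ioi 2) (fun x : ℝ => (g x : ℂ) * (x : ℂ) ^ (-z - 1)) := by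
      funext x
      by_cases hx : 2 < x
      · have hmem : x ∈ Set.Ioi (2 : ℝ) := hx
        simp [hFdef, hx, Set.indicator_of_mem hmem, smul_eq_mul, mul_comm]
      · have hmem : x ∉ Set.Ioi (2 : ℝ) := hx
        simp [hFdef, hx, Set.indicator_of_notMem hmem]
    have : mellin F (-z) = ∫ x in Set.Ioi (0 : ℝ), (x : ℂ) ^ (-z - 1) • F x := rfl
    rw [this, hfun, MeasureTheory.setIntegral_indicator measurableSet_Ioi,
      Set.inter_eq_self_of_subset_right (Set.Ioi_subset_Ioi (by norm_num))]
  -- integrability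
  have hint : ∀ z : ℂ, 1 - α / 2 < z.re →
      MeasureTheory.IntegrableOn
        (fun x : ℝ => (g x : ℂ) * (x : ℂ) ^ (-z - 1)) (Set.Ioi (2 : ℝ)) := by
    intro z hz
    have h1 : (-z).re < α - 1 := by
      rw [Complex.neg_re]; linarith
    have h2 : -z.re - 1 < (-z).re := by
      rw [Complex.neg_re]; linarith
    have hmc : MellinConvergent F (-z) :=
      mellinConvergent_of_isBigO_rpow hFloc hF_top h1 (hF_bot (-z.re - 1)) h2
    have hmc2 : MeasureTheory.IntegrableOn
        (fun t : ℝ => (t : ℂ) ^ (-z - 1) • F t) (Set.Ioi (2 : ℝ)) :=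
      hmc.mono_set (Set.Ioi_subset_Ioi (by norm_num))
    refine hmc2.congr_fun ?_ measurableSet_Ioi
    intro x hx
    have hx' : (2 : ℝ) < x := hx
    simp [hFdef, hx', smul_eq_mul, mul_comm]
  refine ⟨hint, ?_, isOpen_lt continuous_const Complex.continuous_re, ?_⟩
  · -- holomorphy
    have key : ∀ z ∈ {z : ℂ | 1 - α / 2 < z.re},
        DifferentiableAt ℂ (fun z : ℂ => z * mellin F (-z)) z := by
      intro z hz
      have hz' : 1 - α / 2 < z.re := hz
      have h1 : (-z).re < α - 1 := by
        rw [Complex.neg_re]; linarith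
      have h2 : -z.re - 1 < (-z).re := by
        rw [Complex.neg_re]; linarith
      have hm : DifferentiableAt ℂ (mellin F) (-z) :=
        mellin_differentiableAt_of_isBigO_rpow hFloc hF_top h1 (hF_bot (-z.re - 1)) h2
      exact differentiableAt_fun_id.mul (hm.comp z differentiableAt_id.neg)
    simp only [← hEq]
    exact fun z hz => (key z hz).differentiableWithinAt
  · intro z hz
    have : (1 : ℝ) ≤ z.re := hz
    show 1 - α / 2 < z.re
    linarith
end
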